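/- arXiv:2111.08706 — 10 statements merged into one kernel-verified Lean document; each statement's English description precedes it below -/
import Mathlib

section
/- Suppose Z : ℝ → Mat(n,r) is differentiable and satisfies dZ/dt = (Y − Z(ZᵀZ)⁻¹ZᵀY)Cᵀ for a fixed r×m matrix C, with Z(0) of full column rank. Then d(ZᵀZ)/dt = 0 along the flow, i.e., Z(t)ᵀZ(t) = Z(0)ᵀZ(0) for all t where the flow is defined. -/
open Matrix

private lemma entry_deriv (n r : ℕ) (Z : ℝ → Matrix (Fin n) (Fin r) ℝ)
    (Z' : ℝ → Matrix (Fin n) (Fin r) ℝ)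
    (h : ∀ t i j, HasDerivAt (fun s => Z s i j) (Z' t i j) t) (t : ℝ) (i j : Fin r) :
    HasDerivAt (fun s => ((Z s)ᵀ * Z s) i j)
      (((Z' t)ᵀ * Z t + (Z t)ᵀ * Z' t) i j) t := by
  have : ∀ s, ((Z s)ᵀ * Z s) i j = ∑ k, Z s k i * Z s k j := by
    intro s; simp [Matrix.mul_apply, Matrix.transpose_apply]
  simp only [this]
  have : ((Z' t)ᵀ * Z t + (Z t)ᵀ * Z' t) i j
      = ∑ k, (Z' t k i * Z t k j + Z t k i * Z' t k j) := by
    simp [Matrix.mul_apply, Matrix.transpose_apply, Finset.sum_add_distrib]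
  rw [this]
  exact HasDerivAt.fun_sum fun k _ => (h t k i).mul (h t k j)

/-- Along the FA* flow `dZ/dt = (Y − Z(ZᵀZ)⁻¹ZᵀY)Cᵀ` with `Z(0)` of
full column rank, `ZᵀZ` is constant: `Z(t)ᵀZ(t) = Z(0)ᵀZ(0)` for all `t`. -/
theorem stmt2 (n m r : ℕ)
    (Y : Matrix (Fin n) (Fin m) ℝ) (C : Matrix (Fin r) (Fin m) ℝ)
    (Z : ℝ → Matrix (Fin n) (Fin r) ℝ)
    (hZ0 : IsUnit ((Z 0)ᵀ * Z 0))
    (hdyn : ∀ t : ℝ, ∀ i j, HasDerivAt (fun s => Z s i j)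
      (((Y - Z t * ((Z t)ᵀ * Z t)⁻¹ * (Z t)ᵀ * Y) * Cᵀ) i j) t) :
    ∀ t : ℝ, (Z t)ᵀ * Z t = (Z 0)ᵀ * Z 0 := by
  set Z' : ℝ → Matrix (Fin n) (Fin r) ℝ :=
    fun t => (Y - Z t * ((Z t)ᵀ * Z t)⁻¹ * (Z t)ᵀ * Y) * Cᵀ with hZ'
  set W : ℝ → Matrix (Fin r) (Fin r) ℝ := fun t => (Z t)ᵀ * Z t with hW
  -- key algebraic fact: where W t is a unit, Zᵀ Z' = 0
  have hkey : ∀ t, IsUnit (W t) → (Z t)ᵀ * Z' t = 0 := by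
    intro t ht
    have hdet : IsUnit (W t).det := (Matrix.isUnit_iff_isUnit_det _).mp ht
    have hinv : W t * (W t)⁻¹ = 1 := Matrix.mul_nonsing_inv _ hdet
    have : (Z t)ᵀ * (Y - Z t * (W t)⁻¹ * (Z t)ᵀ * Y) = 0 := by
      simp only [Matrix.mul_sub]
      rw [show (Z t)ᵀ * (Z t * (W t)⁻¹ * (Z t)ᵀ * Y)
            = (W t * (W t)⁻¹) * ((Z t)ᵀ * Y) by
          simp only [hW, Matrix.mul_assoc]]
      rw [hinv, Matrix.one_mul, sub_self]
    calc (Z t)ᵀ * Z' t = ((Z t)ᵀ * (Y - Z t * (W t)⁻¹ * (Z t)ᵀ * Y)) * Cᵀ := by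
          rw [hZ']; rw [Matrix.mul_assoc]
      _ = 0 := by rw [this, Matrix.zero_mul]
  have hderivW : ∀ t i j, HasDerivAt (fun s => W s i j)
      (((Z' t)ᵀ * Z t + (Z t)ᵀ * Z' t) i j) t :=
    entry_deriv n r Z Z' (fun t i j => hdyn t i j)
  have hderiv0 : ∀ t, IsUnit (W t) → ∀ i j, HasDerivAt (fun s => W s i j) 0 t := by
    intro t ht i j
    have h0 := hkey t ht
    have htr : (Z' t)ᵀ * Z t = 0 := by
      have := congrArg Matrix.transpose h0
      simpa [Matrix.transpose_mul] using this
    have := hderivW t i j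
    rwa [htr, h0, add_zero, Matrix.zero_apply] at this
  -- continuity of W
  have hWc : Continuous W := by
    apply continuous_matrix
    intro i j
    exact continuous_iff_continuousAt.mpr fun t => (hderivW t i j).continuousAt
  -- the set where W equals W 0 is clopen
  set S : Set ℝ := {t | W t = W 0} with hS
  have hclosed : IsClosed S := isClosed_eq hWc continuous_const
  have hopen : IsOpen S := by
    rw [Metric.isOpen_iff]
    intro t0 ht0
    -- the unit locus is open
    have hUopen : IsOpen {t | (W t).det ≠ 0} :=
      isOpen_ne.preimage (Continuous.matrix_det hWc)
    have ht0U : t0 ∈ {t | (W t).det ≠ 0} := by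
      have : IsUnit (W t0) := by rw [Set.mem_setOf_eq] at ht0; rw [ht0]; exact hZ0
      have := (Matrix.isUnit_iff_isUnit_det _).mp this
      simpa [isUnit_iff_ne_zero] using this
    obtain ⟨ε, hε, hball⟩ := Metric.isOpen_iff.mp hUopen t0 ht0U
    refine ⟨ε, hε, fun s hs => ?_⟩
    -- W is constant on the ball
    have hconv : Convex ℝ (Metric.ball t0 ε) := convex_ball t0 ε
    have hunit : ∀ u ∈ Metric.ball t0 ε, IsUnit (W u) := by
      intro u hu
      exact (Matrix.isUnit_iff_isUnit_det _).mpr (isUnit_iff_ne_zero.mpr (hball hu))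
    have hEq : W s = W t0 := by
      ext i j
      have hdiff : DifferentiableOn ℝ (fun u => W u i j) (Metric.ball t0 ε) :=
        fun u _ => ((hderivW u i j).differentiableAt).differentiableWithinAt
      have hfd : ∀ u ∈ Metric.ball t0 ε,
          fderivWithin ℝ (fun v => W v i j) (Metric.ball t0 ε) u = 0 := by
        intro u hu
        rw [fderivWithin_of_isOpen Metric.isOpen_ball hu]
        have := (hderiv0 u (hunit u hu) i j).hasFDerivAt.fderiv
        rw [this]; ext; simp
      exact hconv.is_const_of_fderivWithin_eq_zero hdiff hfd hs
        (Metric.mem_ball_self hε)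
    rw [Set.mem_setOf_eq] at ht0 ⊢
    rw [hEq, ht0]
  have : S = Set.univ := by
    rcases isClopen_iff.mp ⟨hclosed, hopen⟩ with h | h
    · exfalso
      have : (0 : ℝ) ∈ S := by simp [hS]
      rw [h] at this; exact this
    · exact h
  intro t
  have : t ∈ S := by rw [this]; trivial
  exact this
end

section
/- Under FA* dynamics dZ/dt = (Y − Ŷ)Cᵀ with W = (ZᵀZ)⁻¹ZᵀY and Ŷ = ZW, the alignment matrix A = (ZᵀZ)⁻¹CWᵀ + WCᵀ(ZᵀZ)⁻¹ satisfies dA/dt = 2(ZᵀZ)⁻¹RᵀR(ZᵀZ)⁻¹, where R = (Y − Ŷ)Cᵀ. -/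
open Matrix

private lemma hd_mul {p n r q : ℕ} (P : Matrix (Fin p) (Fin n) ℝ) (Q : Matrix (Fin r) (Fin q) ℝ)
    {M : ℝ → Matrix (Fin n) (Fin r) ℝ} {M' : Matrix (Fin n) (Fin r) ℝ} {t : ℝ}
    (h : ∀ i j, HasDerivAt (fun s => M s i j) (M' i j) t) (i : Fin p) (j : Fin q) :
    HasDerivAt (fun s => (P * M s * Q) i j) ((P * M' * Q) i j) t := by
  have key : ∀ (N : Matrix (Fin n) (Fin r) ℝ),
      (P * N * Q) i j = ∑ l, ∑ k, P i k * N k l * Q l j := by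
    intro N
    simp [Matrix.mul_apply, Finset.sum_mul]
  have h1 : HasDerivAt (fun s => ∑ l, ∑ k, P i k * M s k l * Q l j)
      (∑ l, ∑ k, P i k * M' k l * Q l j) t := by
    apply HasDerivAt.fun_sum
    intro l _
    apply HasDerivAt.fun_sum
    intro k _
    exact ((h k l).const_mul (P i k)).mul_const (Q l j)
  simpa only [key] using h1

/-- Under FA* dynamics `dZ/dt = (Y − Ŷ)Cᵀ` with `W = (ZᵀZ)⁻¹ZᵀY`,
`Ŷ = ZW`, the alignment matrix `A = (ZᵀZ)⁻¹CWᵀ + WCᵀ(ZᵀZ)⁻¹` satisfies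
`dA/dt = 2(ZᵀZ)⁻¹RᵀR(ZᵀZ)⁻¹` where `R = (Y − Ŷ)Cᵀ`. -/
theorem stmt3 (n m r : ℕ)
    (Y : Matrix (Fin n) (Fin m) ℝ) (C : Matrix (Fin r) (Fin m) ℝ)
    (Z : ℝ → Matrix (Fin n) (Fin r) ℝ)
    (hZ : ∀ t : ℝ, IsUnit ((Z t)ᵀ * Z t))
    (W : ℝ → Matrix (Fin r) (Fin m) ℝ)
    (hW : ∀ t, W t = ((Z t)ᵀ * Z t)⁻¹ * (Z t)ᵀ * Y)
    (R : ℝ → Matrix (Fin n) (Fin r) ℝ)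
    (hR : ∀ t, R t = (Y - Z t * W t) * Cᵀ)
    (A : ℝ → Matrix (Fin r) (Fin r) ℝ)
    (hA : ∀ t, A t = ((Z t)ᵀ * Z t)⁻¹ * C * (W t)ᵀ + W t * Cᵀ * ((Z t)ᵀ * Z t)⁻¹)
    (hdyn : ∀ t : ℝ, ∀ i j, HasDerivAt (fun s => Z s i j) ((R t) i j) t) :
    ∀ t : ℝ, ∀ i j, HasDerivAt (fun s => A s i j)
      (((2 : ℝ) • (((Z t)ᵀ * Z t)⁻¹ * (R t)ᵀ * R t * ((Z t)ᵀ * Z t)⁻¹)) i j) t := by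
  have hdet : ∀ t, IsUnit ((Z t)ᵀ * Z t).det :=
    fun t => (Matrix.isUnit_iff_isUnit_det _).mp (hZ t)
  have hGinv : ∀ t, ((Z t)ᵀ * Z t) * ((Z t)ᵀ * Z t)⁻¹ = 1 :=
    fun t => Matrix.mul_nonsing_inv _ (hdet t)
  -- Z^T (Y - Z W) = 0
  have hZres : ∀ t, (Z t)ᵀ * (Y - Z t * W t) = 0 := by
    intro t
    have hmain : (Z t)ᵀ * (Z t * W t) = (Z t)ᵀ * Y := by
      rw [hW t]
      calc (Z t)ᵀ * (Z t * (((Z t)ᵀ * Z t)⁻¹ * (Z t)ᵀ * Y))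
          = (((Z t)ᵀ * Z t) * ((Z t)ᵀ * Z t)⁻¹) * ((Z t)ᵀ * Y) := by
            simp only [Matrix.mul_assoc]
        _ = (Z t)ᵀ * Y := by rw [hGinv t, Matrix.one_mul]
    rw [Matrix.mul_sub, hmain, sub_self]
  have hZR : ∀ t, (Z t)ᵀ * R t = 0 := by
    intro t; rw [hR t, ← Matrix.mul_assoc, hZres t, Matrix.zero_mul]
  have hRZ : ∀ t, (R t)ᵀ * Z t = 0 := by
    intro t
    have h := congrArg Matrix.transpose (hZR t)
    simpa [Matrix.transpose_mul] using h
  -- Z^T Z is constant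
  have hGconst : ∀ s t : ℝ, (Z s)ᵀ * Z s = (Z t)ᵀ * Z t := by
    intro s t
    ext i j
    have hent : ∀ u : ℝ, HasDerivAt (fun v => ((Z v)ᵀ * Z v) i j) 0 u := by
      intro u
      have h1 : HasDerivAt (fun v => ∑ k, Z v k i * Z v k j)
          (∑ k, (R u k i * Z u k j + Z u k i * R u k j)) u :=
        HasDerivAt.fun_sum fun k _ => (hdyn u k i).mul (hdyn u k j)
      have e1 : (∑ k, R u k i * Z u k j) = 0 := by
        have : ((R u)ᵀ * Z u) i j = (0 : Matrix (Fin r) (Fin r) ℝ) i j := by rw [hRZ u]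
        simpa [Matrix.mul_apply, Matrix.transpose_apply] using this
      have e2 : (∑ k, Z u k i * R u k j) = 0 := by
        have : ((Z u)ᵀ * R u) i j = (0 : Matrix (Fin r) (Fin r) ℝ) i j := by rw [hZR u]
        simpa [Matrix.mul_apply, Matrix.transpose_apply] using this
      have h2 : (∑ k, (R u k i * Z u k j + Z u k i * R u k j)) = 0 := by
        rw [Finset.sum_add_distrib, e1, e2, add_zero]
      have hfun : (fun v => ((Z v)ᵀ * Z v) i j) = fun v => ∑ k, Z v k i * Z v k j := by
        funext v; simp [Matrix.mul_apply, Matrix.transpose_apply]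
      rw [hfun, ← h2]
      exact h1
    have hdiff : Differentiable ℝ (fun v => ((Z v)ᵀ * Z v) i j) :=
      fun u => (hent u).differentiableAt
    exact is_const_of_deriv_eq_zero hdiff (fun u => (hent u).deriv) s t
  intro t i j
  set Gi : Matrix (Fin r) (Fin r) ℝ := ((Z t)ᵀ * Z t)⁻¹ with hGi
  have hGsym : Gi ᵀ = Gi := by
    rw [hGi, Matrix.transpose_nonsing_inv]
    congr 1
    rw [Matrix.transpose_mul, Matrix.transpose_transpose]
  set P : Matrix (Fin r) (Fin n) ℝ := Gi * C * Yᵀ with hP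
  set S : Matrix (Fin n) (Fin r) ℝ := Y * Cᵀ * Gi with hS
  -- representation of A
  have hArep : ∀ s : ℝ, A s = P * Z s * Gi + Gi * (Z s)ᵀ * S := by
    intro s
    have hinv_eq : ((Z s)ᵀ * Z s)⁻¹ = Gi := by rw [hGconst s t]
    have hWt : (W s)ᵀ = Yᵀ * Z s * Gi := by
      rw [hW s, hinv_eq]
      rw [Matrix.transpose_mul, Matrix.transpose_mul, Matrix.transpose_transpose, hGsym,
        Matrix.mul_assoc]
    rw [hA s, hinv_eq, hWt, hW s, hinv_eq, hP, hS]
    simp only [Matrix.mul_assoc]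
  -- key residual identities
  have hRR1 : C * (Yᵀ * R t) = (R t)ᵀ * R t := by
    have : (R t)ᵀ = C * (Y - Z t * W t)ᵀ := by
      rw [hR t, Matrix.transpose_mul, Matrix.transpose_transpose]
    rw [this, Matrix.mul_assoc]
    congr 1
    rw [Matrix.transpose_sub, Matrix.sub_mul, Matrix.transpose_mul,
      Matrix.mul_assoc, hZR t, Matrix.mul_zero, sub_zero]
  have hRR2 : (R t)ᵀ * (Y * Cᵀ) = (R t)ᵀ * R t := by
    have h := congrArg Matrix.transpose hRR1
    simp only [Matrix.transpose_mul, Matrix.transpose_transpose] at h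
    rw [← Matrix.mul_assoc]
    exact h
  -- derivative of each piece
  have hd1 : HasDerivAt (fun s => (P * Z s * Gi) i j) ((P * R t * Gi) i j) t :=
    hd_mul P Gi (hdyn t) i j
  have hd2 : HasDerivAt (fun s => (Gi * (Z s)ᵀ * S) i j) ((Gi * (R t)ᵀ * S) i j) t := by
    have heq : ∀ (N : Matrix (Fin n) (Fin r) ℝ), (Gi * Nᵀ * S) i j = (Sᵀ * N * Giᵀ) j i := by
      intro N
      have : (Sᵀ * N * Giᵀ)ᵀ = Gi * Nᵀ * S := by
        rw [Matrix.transpose_mul, Matrix.transpose_mul, Matrix.transpose_transpose,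
          Matrix.transpose_transpose, Matrix.mul_assoc]
      rw [← this]; rfl
    have h := hd_mul Sᵀ Giᵀ (hdyn t) j i
    simp only [heq]
    exact h
  have hsum := hd1.add hd2
  have hfun : (fun s => A s i j) =
      fun s => (P * Z s * Gi) i j + (Gi * (Z s)ᵀ * S) i j := by
    funext s; rw [hArep s]; rfl
  rw [hfun]
  have hval : (P * R t * Gi) i j + (Gi * (R t)ᵀ * S) i j =
      (((2 : ℝ) • (((Z t)ᵀ * Z t)⁻¹ * (R t)ᵀ * R t * ((Z t)ᵀ * Z t)⁻¹)) i j) := by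
    have hm : P * R t * Gi + Gi * (R t)ᵀ * S =
        (2 : ℝ) • (Gi * (R t)ᵀ * R t * Gi) := by
      have e1 : P * R t * Gi = Gi * (R t)ᵀ * R t * Gi := by
        rw [hP]
        calc Gi * C * Yᵀ * R t * Gi
            = Gi * (C * (Yᵀ * R t)) * Gi := by simp only [Matrix.mul_assoc]
          _ = Gi * ((R t)ᵀ * R t) * Gi := by rw [hRR1]
          _ = Gi * (R t)ᵀ * R t * Gi := by simp only [Matrix.mul_assoc]
      have e2 : Gi * (R t)ᵀ * S = Gi * (R t)ᵀ * R t * Gi := by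
        rw [hS]
        calc Gi * (R t)ᵀ * (Y * Cᵀ * Gi)
            = Gi * ((R t)ᵀ * (Y * Cᵀ)) * Gi := by simp only [Matrix.mul_assoc]
          _ = Gi * ((R t)ᵀ * R t) * Gi := by rw [hRR2]
          _ = Gi * (R t)ᵀ * R t * Gi := by simp only [Matrix.mul_assoc]
      rw [e1, e2, two_smul]
    calc (P * R t * Gi) i j + (Gi * (R t)ᵀ * S) i j
        = (P * R t * Gi + Gi * (R t)ᵀ * S) i j := rfl
      _ = ((2 : ℝ) • (Gi * (R t)ᵀ * R t * Gi)) i j := by rw [hm]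
  rw [← hval]
  exact hsum
end

section
/- Under FA* dynamics with ZᵀZ = I (orthonormal Z), the loss ℓ(t) = ‖(Y − Ŷ(t))Cᵀ‖_F² satisfies dℓ/dt = −Tr(R A Rᵀ), where R = (Y − Ŷ)Cᵀ and A = CWᵀ + WCᵀ with W = ZᵀY. -/
open Matrix BigOperators

/-- Under FA* dynamics with `ZᵀZ = I`, the loss
`ℓ(t) = ‖(Y − Ŷ(t))Cᵀ‖_F²` satisfies `dℓ/dt = −Tr(R A Rᵀ)`, where
`R = (Y − Ŷ)Cᵀ`, `A = CWᵀ + WCᵀ`, `W = ZᵀY`, `Ŷ = ZZᵀY`. -/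
theorem stmt4 (n m r : ℕ)
    (Y : Matrix (Fin n) (Fin m) ℝ) (C : Matrix (Fin r) (Fin m) ℝ)
    (Z : ℝ → Matrix (Fin n) (Fin r) ℝ)
    (horth : ∀ t : ℝ, (Z t)ᵀ * Z t = 1)
    (W : ℝ → Matrix (Fin r) (Fin m) ℝ) (hW : ∀ t, W t = (Z t)ᵀ * Y)
    (R : ℝ → Matrix (Fin n) (Fin r) ℝ)
    (hR : ∀ t, R t = (Y - Z t * W t) * Cᵀ)
    (A : ℝ → Matrix (Fin r) (Fin r) ℝ)
    (hA : ∀ t, A t = C * (W t)ᵀ + W t * Cᵀ)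
    (hdyn : ∀ t : ℝ, ∀ i j, HasDerivAt (fun s => Z s i j) ((R t) i j) t)
    (ℓ : ℝ → ℝ) (hℓ : ∀ t, ℓ t = ∑ i, ∑ j, (R t i j) ^ 2) :
    ∀ t : ℝ, HasDerivAt ℓ (-(Matrix.trace (R t * A t * (R t)ᵀ))) t := by
  intro t
  classical
  set R' : Matrix (Fin n) (Fin r) ℝ :=
    -((R t * W t + Z t * ((R t)ᵀ * Y)) * Cᵀ) with hR'def
  -- Zᵀ R = 0
  have hZR : (Z t)ᵀ * R t = 0 := by
    rw [hR t, hW t, ← Matrix.mul_assoc, Matrix.mul_sub, ← Matrix.mul_assoc, horth t,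
      Matrix.one_mul, sub_self, Matrix.zero_mul]
  have hRZ : (R t)ᵀ * Z t = 0 := by
    have h := congrArg Matrix.transpose hZR
    simpa [Matrix.transpose_mul] using h
  -- entrywise derivative of R
  have hRd : ∀ i j, HasDerivAt (fun s => R s i j) (R' i j) t := by
    intro i j
    have hfun : (fun s => R s i j) =
        fun s => ∑ k, (Y i k - ∑ a, Z s i a * ∑ b, Z s b a * Y b k) * C j k := by
      funext s
      simp [hR, hW, Matrix.mul_apply, Matrix.sub_apply, Matrix.transpose_apply,
        Finset.mul_sum]
    have h1 : HasDerivAt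
        (fun s => ∑ k, (Y i k - ∑ a, Z s i a * ∑ b, Z s b a * Y b k) * C j k)
        (∑ k, (0 - ∑ a, (R t i a * ∑ b, Z t b a * Y b k
            + Z t i a * ∑ b, R t b a * Y b k)) * C j k) t := by
      apply HasDerivAt.fun_sum
      intro k _
      apply HasDerivAt.mul_const
      apply HasDerivAt.sub (hasDerivAt_const t _)
      apply HasDerivAt.fun_sum
      intro a _
      exact (hdyn t i a).mul (HasDerivAt.fun_sum fun b _ => (hdyn t b a).mul_const _)
    have heq : R' i j = ∑ k, (0 - ∑ a, (R t i a * ∑ b, Z t b a * Y b k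
        + Z t i a * ∑ b, R t b a * Y b k)) * C j k := by
      simp only [hR'def, hW, Matrix.mul_apply, Matrix.neg_apply, Matrix.add_apply,
        Matrix.transpose_apply, Finset.sum_add_distrib, Finset.sum_mul, Finset.mul_sum,
        ← Finset.sum_neg_distrib]
      apply Finset.sum_congr rfl
      intro k _
      ring
    rw [hfun, heq]
    exact h1
  -- derivative of ℓ
  have hl : HasDerivAt ℓ (∑ i, ∑ j, 2 * R t i j * R' i j) t := by
    have hfl : ℓ = fun s => ∑ i, ∑ j, (R s i j) ^ 2 := funext hℓ
    rw [hfl]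
    apply HasDerivAt.fun_sum
    intro i _
    apply HasDerivAt.fun_sum
    intro j _
    simpa using (hRd i j).fun_pow 2
  -- algebraic identity
  have key : ∑ i, ∑ j, 2 * R t i j * R' i j
      = -(Matrix.trace (R t * A t * (R t)ᵀ)) := by
    have hsum : ∑ i, ∑ j, 2 * R t i j * R' i j
        = 2 * Matrix.trace (R' * (R t)ᵀ) := by
      simp [Matrix.trace, Matrix.diag, Matrix.mul_apply, Matrix.transpose_apply,
        Finset.mul_sum]
      congr 1; ext i; congr 1; ext j; ring
    have h2 : Matrix.trace (Z t * ((R t)ᵀ * Y) * Cᵀ * (R t)ᵀ) = 0 := by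
      rw [Matrix.trace_mul_comm, ← Matrix.mul_assoc, ← Matrix.mul_assoc, hRZ]
      simp
    have h3 : Matrix.trace (R t * (C * (W t)ᵀ) * (R t)ᵀ)
        = Matrix.trace (R t * (W t * Cᵀ) * (R t)ᵀ) := by
      rw [← Matrix.trace_transpose (R t * (C * (W t)ᵀ) * (R t)ᵀ)]
      simp [Matrix.transpose_mul, Matrix.mul_assoc]
    rw [hsum, hR'def, hA t]
    rw [Matrix.neg_mul, Matrix.trace_neg, Matrix.add_mul, Matrix.add_mul,
      Matrix.trace_add, h2, add_zero]
    rw [Matrix.mul_add, Matrix.add_mul, Matrix.trace_add, h3,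
      ← Matrix.mul_assoc (R t) (W t) Cᵀ]
    ring
  rw [← key]
  exact hl
end

section
/- Under FA* dynamics, for every fixed vector x ∈ ℝʳ, the map t ↦ xᵀA(t)x is nondecreasing, where A = (ZᵀZ)⁻¹CWᵀ + WCᵀ(ZᵀZ)⁻¹. Consequently the minimum eigenvalue of A(t) is nondecreasing in t. -/
open Matrix

/-- Rayleigh-type lower bound: the minimum eigenvalue of a Hermitian real matrix
is at most the quadratic form at any unit vector. -/
lemma stmt6_rayleigh_min_le {r : ℕ} (B : Matrix (Fin r) (Fin r) ℝ) (hB : B.IsHermitian)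
    (x : Fin r → ℝ) (hx : x ⬝ᵥ x = 1) :
    (⨅ i, hB.eigenvalues i) ≤ x ⬝ᵥ B *ᵥ x := by
  classical
  have hne : Nonempty (Fin r) := by
    rcases isEmpty_or_nonempty (Fin r) with h | h
    · exfalso; rw [dotProduct] at hx; simp at hx
    · exact h
  have hc : ∀ i, (⨅ i, hB.eigenvalues i) ≤ hB.eigenvalues i := fun i =>
    ciInf_le (Finite.bddBelow_range _) i
  set U : Matrix (Fin r) (Fin r) ℝ := (hB.eigenvectorUnitary : Matrix (Fin r) (Fin r) ℝ) with hU
  have hstar : star U = Uᵀ := by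
    ext i j; simp [Matrix.conjTranspose_apply]
  have hUU : U * Uᵀ = 1 := by
    have := (Matrix.mem_unitaryGroup_iff).mp hB.eigenvectorUnitary.2
    rwa [hstar] at this
  set w := Uᵀ *ᵥ x with hw
  have h1 : x ⬝ᵥ B *ᵥ x = ∑ i, hB.eigenvalues i * (w i)^2 := by
    conv_lhs => rw [hB.spectral_theorem, Unitary.conjStarAlgAut_apply]
    rw [hstar, ← Matrix.mulVec_mulVec, ← Matrix.mulVec_mulVec, Matrix.dotProduct_mulVec]
    have hxU : x ᵥ* U = w := by
      rw [hw, ← Matrix.vecMul_transpose, Matrix.transpose_transpose]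
    rw [hxU]
    simp [dotProduct, Matrix.mulVec_diagonal, Function.comp]
    exact Finset.sum_congr rfl fun i _ => by ring
  have h2 : ∑ i, (w i)^2 = 1 := by
    have key : w ⬝ᵥ w = 1 := by
      rw [hw, Matrix.dotProduct_mulVec, Matrix.vecMul_transpose, Matrix.mulVec_mulVec,
        hUU, Matrix.one_mulVec, hx]
    rw [dotProduct] at key
    simp only [← sq] at key
    rw [key]
  rw [h1]
  calc (⨅ i, hB.eigenvalues i) = ∑ i, (⨅ i, hB.eigenvalues i) * (w i)^2 := by
        rw [← Finset.mul_sum, h2, mul_one]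
      _ ≤ ∑ i, hB.eigenvalues i * (w i)^2 :=
        Finset.sum_le_sum fun i _ => mul_le_mul_of_nonneg_right (hc i) (sq_nonneg _)

/-- The quadratic-form expression built from `RᵀR` is nonnegative. -/
lemma stmt6_quad_nonneg {n r : ℕ} (R : Matrix (Fin n) (Fin r) ℝ) (u : Fin r → ℝ) :
    0 ≤ ∑ i, ∑ j, u i * (((Rᵀ * R) j i + (Rᵀ * R) i j) * u j) := by
  have hQ : ∀ i j, (Rᵀ * R) j i = (Rᵀ * R) i j := by
    intro i j
    simp only [Matrix.mul_apply, Matrix.transpose_apply]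
    exact Finset.sum_congr rfl fun k _ => mul_comm _ _
  have hexp : ∑ i, ∑ j, u i * (((Rᵀ * R) j i + (Rᵀ * R) i j) * u j)
      = 2 * (u ⬝ᵥ ((Rᵀ * R) *ᵥ u)) := by
    simp only [dotProduct, Matrix.mulVec, Finset.mul_sum]
    refine Finset.sum_congr rfl fun i _ => Finset.sum_congr rfl fun j _ => ?_
    rw [hQ i j]
    ring
  have hpos : 0 ≤ u ⬝ᵥ ((Rᵀ * R) *ᵥ u) := by
    have h : u ⬝ᵥ ((Rᵀ * R) *ᵥ u) = (R *ᵥ u) ⬝ᵥ (R *ᵥ u) := by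
      rw [← Matrix.mulVec_mulVec, Matrix.dotProduct_mulVec, Matrix.vecMul_transpose]
    rw [h, dotProduct]
    exact Finset.sum_nonneg fun i _ => mul_self_nonneg _
  rw [hexp]
  linarith

/-- Under FA* dynamics, for every fixed `x ∈ ℝʳ` the map
`t ↦ xᵀA(t)x` is nondecreasing, where `A = (ZᵀZ)⁻¹CWᵀ + WCᵀ(ZᵀZ)⁻¹`;
consequently the minimum eigenvalue of `A(t)` is nondecreasing in `t`. -/
theorem stmt6 (n m r : ℕ)
    (Y : Matrix (Fin n) (Fin m) ℝ) (C : Matrix (Fin r) (Fin m) ℝ)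
    (Z : ℝ → Matrix (Fin n) (Fin r) ℝ)
    (hZ : ∀ t : ℝ, IsUnit ((Z t)ᵀ * Z t))
    (W : ℝ → Matrix (Fin r) (Fin m) ℝ)
    (hW : ∀ t, W t = ((Z t)ᵀ * Z t)⁻¹ * (Z t)ᵀ * Y)
    (R : ℝ → Matrix (Fin n) (Fin r) ℝ)
    (hR : ∀ t, R t = (Y - Z t * W t) * Cᵀ)
    (A : ℝ → Matrix (Fin r) (Fin r) ℝ)
    (hA : ∀ t, A t = ((Z t)ᵀ * Z t)⁻¹ * C * (W t)ᵀ + W t * Cᵀ * ((Z t)ᵀ * Z t)⁻¹)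
    (hdyn : ∀ t : ℝ, ∀ i j, HasDerivAt (fun s => Z s i j) ((R t) i j) t)
    (hHerm : ∀ t, (A t).IsHermitian) :
    (∀ x : Fin r → ℝ, Monotone (fun t => x ⬝ᵥ (A t) *ᵥ x)) ∧
      Monotone (fun t => ⨅ i, (hHerm t).eigenvalues i) := by
  classical
  have hdet : ∀ t, IsUnit ((Z t)ᵀ * Z t).det := fun t => (Matrix.isUnit_iff_isUnit_det _).1 (hZ t)
  -- `ZᵀR = 0`
  have hZR : ∀ t, (Z t)ᵀ * R t = 0 := by
    intro t
    have h1 : (Z t)ᵀ * (Z t * W t) = (Z t)ᵀ * Y := by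
      rw [hW]
      simp only [← Matrix.mul_assoc]
      rw [Matrix.mul_nonsing_inv _ (hdet t), Matrix.one_mul]
    rw [hR, ← Matrix.mul_assoc, Matrix.mul_sub, h1, sub_self, Matrix.zero_mul]
  have hRZ : ∀ t, (R t)ᵀ * Z t = 0 := by
    intro t
    have := congrArg Matrix.transpose (hZR t)
    rwa [Matrix.transpose_mul, Matrix.transpose_transpose, Matrix.transpose_zero] at this
  -- `ZᵀZ` has zero derivative, hence is constant
  have hSderiv : ∀ t i j, HasDerivAt (fun s => ((Z s)ᵀ * Z s) i j) 0 t := by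
    intro t i j
    have h : HasDerivAt (fun s => ∑ k, Z s k i * Z s k j)
        (∑ k, (R t k i * Z t k j + Z t k i * R t k j)) t :=
      HasDerivAt.fun_sum fun k _ => ((hdyn t k i).mul (hdyn t k j))
    have heq : (fun s => ((Z s)ᵀ * Z s) i j) = fun s => ∑ k, Z s k i * Z s k j := by
      funext s; simp [Matrix.mul_apply, Matrix.transpose_apply]
    rw [heq]
    convert h using 1
    have h1 : ∑ k, (R t k i * Z t k j + Z t k i * R t k j)
        = ((Z t)ᵀ * R t) j i + ((Z t)ᵀ * R t) i j := by
      rw [Finset.sum_add_distrib]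
      simp only [Matrix.mul_apply, Matrix.transpose_apply]
      congr 1
      · exact Finset.sum_congr rfl fun k _ => mul_comm _ _
    rw [h1, hZR t]; simp
  have hScst : ∀ t, (Z t)ᵀ * Z t = (Z 0)ᵀ * Z 0 := by
    intro t
    ext i j
    exact is_const_of_deriv_eq_zero (fun s => (hSderiv s i j).differentiableAt)
      (fun s => (hSderiv s i j).deriv) t 0
  -- rewrite `A`
  have hA' : ∀ t, A t = ((Z 0)ᵀ * Z 0)⁻¹ *
      (((Z t)ᵀ * (Y * Cᵀ))ᵀ + (Z t)ᵀ * (Y * Cᵀ)) * ((Z 0)ᵀ * Z 0)⁻¹ := by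
    intro t
    have hSymm : ((Z t)ᵀ * Z t)ᵀ = (Z t)ᵀ * Z t := by
      rw [Matrix.transpose_mul, Matrix.transpose_transpose]
    rw [hA, hW, ← hScst t]
    simp only [Matrix.transpose_mul, Matrix.transpose_transpose, Matrix.transpose_nonsing_inv,
      hSymm, Matrix.mul_add, Matrix.add_mul, Matrix.mul_assoc]
  -- derivative of entries of `M t = Zᵀ(YCᵀ)`
  have hMd : ∀ (t : ℝ) i j, HasDerivAt (fun s => ((Z s)ᵀ * (Y * Cᵀ)) i j)
      (((R t)ᵀ * (Y * Cᵀ)) i j) t := by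
    intro t i j
    have h : HasDerivAt (fun s => ∑ k, Z s k i * (Y * Cᵀ) k j)
        (∑ k, R t k i * (Y * Cᵀ) k j) t :=
      HasDerivAt.fun_sum fun k _ => (hdyn t k i).mul_const _
    have heq : (fun s => ((Z s)ᵀ * (Y * Cᵀ)) i j) = fun s => ∑ k, Z s k i * (Y * Cᵀ) k j := by
      funext s; simp [Matrix.mul_apply, Matrix.transpose_apply]
    rw [heq]
    convert h using 1
    simp only [Matrix.mul_apply, Matrix.transpose_apply]
  -- `Rᵀ(YCᵀ) = RᵀR`
  have hRR : ∀ t, (R t)ᵀ * (Y * Cᵀ) = (R t)ᵀ * R t := by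
    intro t
    have h0 : (R t)ᵀ * (Z t * W t * Cᵀ) = 0 := by
      rw [Matrix.mul_assoc (Z t), ← Matrix.mul_assoc, hRZ t, Matrix.zero_mul]
    have e1 : (R t)ᵀ * R t = (R t)ᵀ * (Y * Cᵀ) - (R t)ᵀ * (Z t * W t * Cᵀ) := by
      calc (R t)ᵀ * R t = (R t)ᵀ * ((Y - Z t * W t) * Cᵀ) := by rw [← hR t]
        _ = (R t)ᵀ * (Y * Cᵀ - Z t * W t * Cᵀ) := by rw [Matrix.sub_mul]
        _ = (R t)ᵀ * (Y * Cᵀ) - (R t)ᵀ * (Z t * W t * Cᵀ) := by rw [Matrix.mul_sub]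
    rw [e1, h0, sub_zero]
  -- Part 1
  have key : ∀ x : Fin r → ℝ, Monotone (fun t => x ⬝ᵥ A t *ᵥ x) := by
    intro x
    have hBsymm : (((Z 0)ᵀ * Z 0)⁻¹)ᵀ = ((Z 0)ᵀ * Z 0)⁻¹ := by
      rw [Matrix.transpose_nonsing_inv, Matrix.transpose_mul, Matrix.transpose_transpose]
    obtain ⟨u, hu⟩ : ∃ u, u = ((Z 0)ᵀ * Z 0)⁻¹ *ᵥ x := ⟨_, rfl⟩
    have hfeq : (fun t => x ⬝ᵥ A t *ᵥ x)
        = fun t => ∑ i, ∑ j, u i *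
            ((((Z t)ᵀ * (Y * Cᵀ)) j i + ((Z t)ᵀ * (Y * Cᵀ)) i j) * u j) := by
      funext t
      rw [hA' t, ← Matrix.mulVec_mulVec, ← Matrix.mulVec_mulVec, Matrix.dotProduct_mulVec,
        ← hu]
      have h2 : x ᵥ* ((Z 0)ᵀ * Z 0)⁻¹ = u := by
        rw [hu, ← Matrix.vecMul_transpose, hBsymm]
      rw [h2]
      simp only [dotProduct, Matrix.mulVec, Matrix.add_apply, Matrix.transpose_apply,
        Finset.mul_sum]
    have hda : ∀ t : ℝ, HasDerivAt (fun t => ∑ i, ∑ j, u i *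
          ((((Z t)ᵀ * (Y * Cᵀ)) j i + ((Z t)ᵀ * (Y * Cᵀ)) i j) * u j))
        (∑ i, ∑ j, u i *
          ((((R t)ᵀ * (Y * Cᵀ)) j i + ((R t)ᵀ * (Y * Cᵀ)) i j) * u j)) t := by
      intro t
      exact HasDerivAt.fun_sum fun i _ => HasDerivAt.fun_sum fun j _ =>
        ((((hMd t j i).add (hMd t i j)).mul_const (u j)).const_mul (u i))
    rw [hfeq]
    refine monotone_of_deriv_nonneg (fun t => (hda t).differentiableAt) (fun t => ?_)
    rw [(hda t).deriv, hRR t]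
    exact stmt6_quad_nonneg (R t) u
  refine ⟨key, ?_⟩
  -- Part 2
  intro t t' htt'
  rcases isEmpty_or_nonempty (Fin r) with hE | hNE
  · simp
  · obtain ⟨i₀, hi₀⟩ := exists_eq_ciInf_of_finite (f := (hHerm t').eigenvalues)
    set v : Fin r → ℝ := ⇑((hHerm t').eigenvectorBasis i₀) with hv
    have hv1 : v ⬝ᵥ v = 1 := by
      have hnorm := (hHerm t').eigenvectorBasis.orthonormal.1 i₀
      have h : v ⬝ᵥ v = ‖(hHerm t').eigenvectorBasis i₀‖ ^ 2 := by
        rw [EuclideanSpace.norm_eq, Real.sq_sqrt (Finset.sum_nonneg fun i _ => sq_nonneg _)]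
        simp [dotProduct, sq, Real.norm_eq_abs, abs_mul_abs_self, hv]
      rw [h, hnorm]; norm_num
    have hev : (hHerm t').eigenvalues i₀ = v ⬝ᵥ A t' *ᵥ v := by
      have := (hHerm t').eigenvalues_eq i₀
      simpa using this
    calc (⨅ i, (hHerm t).eigenvalues i) ≤ v ⬝ᵥ A t *ᵥ v :=
          stmt6_rayleigh_min_le (A t) (hHerm t) v hv1
      _ ≤ v ⬝ᵥ A t' *ᵥ v := key v htt'
      _ = ⨅ i, (hHerm t').eigenvalues i := by rw [← hev, hi₀]
end

section
/- Let v₁,…,vₙ : ℝ → ℝʳ be integrable vector-valued functions such that for all T ≥ 0 and all k, ∑ᵢ ∫₀ᵀ ⟨vₖ(T), vᵢ(t)⟩² dt ≤ c‖vₖ(T)‖² for some constant c ≥ 0. Then for all T ≥ 0, ∑ᵢ ∫₀ᵀ ‖vᵢ(t)‖² dt ≤ 2rc. -/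
open Matrix MeasureTheory BigOperators

lemma aemeas_pi' {α : Type*} [MeasurableSpace α] {ι : Type*} [Finite ι]
    {f : α → ι → ℝ} {μ : Measure α} (h : ∀ p, AEMeasurable (fun t => f t p) μ) :
    AEMeasurable f μ := by
  refine ⟨fun t p => (h p).mk _ t, measurable_pi_lambda _ (fun p => (h p).measurable_mk), ?_⟩
  have h2 : ∀ᵐ t ∂μ, ∀ p, f t p = (h p).mk _ t := Filter.eventually_all.2 fun p => (h p).ae_eq_mk
  filter_upwards [h2] with t ht
  funext p; exact ht p

lemma entry_aemeas (n r : ℕ) (v : Fin n → ℝ → (Fin r → ℝ)) (μ : Measure ℝ)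
    (hm : ∀ i k : Fin n, ∀ S : ℝ,
      AEMeasurable (fun t => (v k S ⬝ᵥ v i t) ^ 2) μ) (i : Fin n) :
    AEMeasurable (fun t => (fun j l => v i t j * v i t l : Fin r → Fin r → ℝ)) μ := by
  classical
  set G : Fin n × ℝ → (Fin r → Fin r → ℝ) := fun p => (fun j l => v p.1 p.2 j * v p.1 p.2 l) with hG
  obtain ⟨b, hbsub, hbspan, hbind⟩ := exists_linearIndependent ℝ (Set.range G)
  have hbfin : b.Finite := hbind.setFinite
  haveI : Fintype b := hbfin.fintype
  -- Frobenius pairing with elements of b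
  set Λ : (Fin r → Fin r → ℝ) →ₗ[ℝ] (b → ℝ) :=
    { toFun := fun X p => ∑ j, ∑ l, (p : (Fin r → Fin r → ℝ)) j l * X j l
      map_add' := by
        intro X Y; funext p
        simp [Pi.add_apply, mul_add, Finset.sum_add_distrib]
      map_smul' := by
        intro c X; funext p
        simp [Pi.smul_apply, smul_eq_mul, Finset.mul_sum, mul_left_comm] } with hΛ
  set W : Submodule ℝ (Fin r → Fin r → ℝ) := Submodule.span ℝ b with hW
  have hker : LinearMap.ker (Λ.comp W.subtype) = ⊥ := by
    rw [LinearMap.ker_eq_bot']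
    intro X hX
    have hXW : (X : (Fin r → Fin r → ℝ)) ∈ Submodule.span ℝ b := X.2
    rw [Submodule.mem_span_set'] at hXW
    obtain ⟨m, c, y, hrep⟩ := hXW
    have hfun : ∀ p : b, Λ (X : (Fin r → Fin r → ℝ)) p = 0 := fun p => by
      simpa using congrFun hX p
    have hXrep : ∀ j l, ∑ a : Fin m, c a * (y a : Fin r → Fin r → ℝ) j l
        = (X : Fin r → Fin r → ℝ) j l := by
      intro j l
      have h4 := congrFun (congrFun hrep j) l
      simpa [Finset.sum_apply, Pi.smul_apply, smul_eq_mul] using h4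
    have hsq : ∑ j, ∑ l, (X : Fin r → Fin r → ℝ) j l * (X : Fin r → Fin r → ℝ) j l = 0 := by
      calc ∑ j, ∑ l, (X : Fin r → Fin r → ℝ) j l * (X : Fin r → Fin r → ℝ) j l
          = ∑ j, ∑ l, (∑ a : Fin m, c a * (y a : Fin r → Fin r → ℝ) j l)
              * (X : Fin r → Fin r → ℝ) j l :=
            Finset.sum_congr rfl fun j _ => Finset.sum_congr rfl fun l _ => by rw [hXrep]
        _ = ∑ j, ∑ l, ∑ a : Fin m, c a * ((y a : Fin r → Fin r → ℝ) j l
              * (X : Fin r → Fin r → ℝ) j l) := by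
            simp [Finset.sum_mul, mul_assoc]
        _ = ∑ j, ∑ a : Fin m, ∑ l, c a * ((y a : Fin r → Fin r → ℝ) j l
              * (X : Fin r → Fin r → ℝ) j l) :=
            Finset.sum_congr rfl fun j _ => Finset.sum_comm
        _ = ∑ a : Fin m, ∑ j, ∑ l, c a * ((y a : Fin r → Fin r → ℝ) j l
              * (X : Fin r → Fin r → ℝ) j l) := Finset.sum_comm
        _ = ∑ a : Fin m, c a * Λ (X : Fin r → Fin r → ℝ) (y a) := by
            simp [hΛ, Finset.mul_sum]
        _ = 0 := by simp [hfun]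
    have hz : ∀ j l, (X : Fin r → Fin r → ℝ) j l = 0 := by
      intro j l
      have h1 : ∀ j ∈ Finset.univ, (0:ℝ) ≤ ∑ l, (X : Fin r → Fin r → ℝ) j l * (X : Fin r → Fin r → ℝ) j l :=
        fun j _ => Finset.sum_nonneg fun l _ => mul_self_nonneg _
      have hj := (Finset.sum_eq_zero_iff_of_nonneg h1).1 hsq j (Finset.mem_univ j)
      have h2 : ∀ l ∈ Finset.univ, (0:ℝ) ≤ (X : Fin r → Fin r → ℝ) j l * (X : Fin r → Fin r → ℝ) j l :=
        fun l _ => mul_self_nonneg _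
      have hl := (Finset.sum_eq_zero_iff_of_nonneg h2).1 hj l (Finset.mem_univ l)
      exact mul_self_eq_zero.1 hl
    have : (X : Fin r → Fin r → ℝ) = 0 := by
      funext j l; exact hz j l
    exact Subtype.ext this
  obtain ⟨g, hg⟩ := (Λ.comp W.subtype).exists_leftInverse_of_injective hker
  have hGW : ∀ t : ℝ, G (i, t) ∈ W := by
    intro t
    rw [hbspan]
    exact Submodule.subset_span ⟨(i, t), rfl⟩
  have hrec : ∀ t : ℝ, (W.subtype (g (Λ (G (i, t))))) = G (i, t) := by
    intro t
    have h3 := LinearMap.congr_fun hg ⟨G (i, t), hGW t⟩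
    simpa using congrArg Subtype.val h3
  have hφ : AEMeasurable (fun t => (fun p : b => Λ (G (i, t)) p)) μ := by
    apply aemeas_pi'
    intro p
    obtain ⟨⟨k, S⟩, hq⟩ := hbsub p.2
    have hcoord : (fun t => Λ (G (i, t)) p) = fun t => (v k S ⬝ᵥ v i t) ^ 2 := by
      funext t
      have hpv : (p : (Fin r → Fin r → ℝ)) = G (k, S) := hq.symm
      simp only [hΛ, LinearMap.coe_mk, AddHom.coe_mk, hpv, hG]
      rw [dotProduct, sq, Finset.sum_mul_sum]
      apply Finset.sum_congr rfl; intro j _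
      apply Finset.sum_congr rfl; intro l _
      ring
    rw [hcoord]
    exact hm i k S
  have hcont : Continuous (fun z : (b → ℝ) => W.subtype (g z)) :=
    (W.subtype.comp g).continuous_of_finiteDimensional
  have hcomp : AEMeasurable (fun t => W.subtype (g (fun p : b => Λ (G (i, t)) p))) μ :=
    hcont.measurable.comp_aemeasurable hφ
  have : AEMeasurable (fun t => G (i, t)) μ := by
    simpa only [hrec] using hcomp
  simpa [hG] using this



lemma sq_integral_Ioc (T : ℝ) (h : ℝ → ℝ)
    (hh : IntegrableOn h (Set.Ioc 0 T)) :
    Integrable (fun s => h s * ∫ t in Set.Ioc (0:ℝ) s, h t)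
        (volume.restrict (Set.Ioc (0:ℝ) T)) ∧
    (∫ t in Set.Ioc (0:ℝ) T, h t) ^ 2
      = 2 * ∫ s in Set.Ioc (0:ℝ) T, h s * ∫ t in Set.Ioc (0:ℝ) s, h t := by
  set μ := volume.restrict (Set.Ioc (0:ℝ) T) with hμ
  set A := ∫ t in Set.Ioc (0:ℝ) T, h t with hA
  set K : ℝ → ℝ := fun s => ∫ t in Set.Ioc (0:ℝ) s, h t with hK
  set F : ℝ × ℝ → ℝ := fun q => h q.1 * Set.indicator (Set.Iic q.1) h q.2 with hF
  have hFeq : F = Set.indicator {q : ℝ × ℝ | q.2 ≤ q.1} (fun q => h q.1 * h q.2) := by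
    funext q
    by_cases hq : q.2 ≤ q.1
    · simp [hF, Set.indicator_apply, hq]
    · simp [hF, Set.indicator_apply, hq]
  have hmeasset : MeasurableSet {q : ℝ × ℝ | q.2 ≤ q.1} :=
    measurableSet_le measurable_snd measurable_fst
  have hFint : Integrable F (μ.prod μ) := by
    rw [hFeq]
    exact (hh.mul_prod hh).indicator hmeasset
  -- first iterated integral
  have claim1 : ∀ s ∈ Set.Ioc (0:ℝ) T, ∫ t, F (s, t) ∂μ = h s * K s := by
    intro s hs
    have : (fun t => F (s, t)) = fun t => h s * Set.indicator (Set.Iic s) h t := rfl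
    rw [this, integral_const_mul, integral_indicator measurableSet_Iic]
    congr 1
    rw [hμ, Measure.restrict_restrict measurableSet_Iic]
    have : Set.Iic s ∩ Set.Ioc 0 T = Set.Ioc 0 s := by
      ext t
      simp only [Set.mem_inter_iff, Set.mem_Iic, Set.mem_Ioc]
      constructor
      · rintro ⟨h1, h2, h3⟩; exact ⟨h2, h1⟩
      · rintro ⟨h1, h2⟩; exact ⟨h2, h1, h2.trans hs.2⟩
    rw [this]
  have claim2 : ∀ t ∈ Set.Ioc (0:ℝ) T, ∫ s, F (s, t) ∂μ = (A - K t) * h t := by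
    intro t ht
    have heq : (fun s => F (s, t)) = Set.indicator (Set.Ici t) (fun u => h u * h t) := by
      funext s
      by_cases hc : t ≤ s
      · rw [Set.indicator_of_mem (Set.mem_Ici.2 hc)]
        show h s * Set.indicator (Set.Iic s) h t = _
        rw [Set.indicator_of_mem (Set.mem_Iic.2 hc)]
      · rw [Set.indicator_of_notMem (fun hc' => hc (Set.mem_Ici.1 hc'))]
        show h s * Set.indicator (Set.Iic s) h t = 0
        rw [Set.indicator_of_notMem (fun hc' => hc (Set.mem_Iic.1 hc')), mul_zero]
    rw [heq, integral_indicator measurableSet_Ici, integral_mul_const]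
    congr 1
    rw [hμ, Measure.restrict_restrict measurableSet_Ici]
    have h5 : Set.Ici t ∩ Set.Ioc 0 T = Set.Icc t T := by
      ext s
      simp only [Set.mem_inter_iff, Set.mem_Ici, Set.mem_Ioc, Set.mem_Icc]
      constructor
      · rintro ⟨h1, _, h3⟩; exact ⟨h1, h3⟩
      · rintro ⟨h1, h2⟩; exact ⟨h1, ht.1.trans_le h1, h2⟩
    rw [h5, integral_Icc_eq_integral_Ioc]
    have hsplit : A = K t + ∫ s in Set.Ioc t T, h s := by
      rw [hA, hK]
      rw [← setIntegral_union (Set.Ioc_disjoint_Ioc.2 (by simp)) measurableSet_Ioc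
        (hh.mono_set (Set.Ioc_subset_Ioc_right ht.2)) (hh.mono_set (Set.Ioc_subset_Ioc_left ht.1.le)),
        Set.Ioc_union_Ioc_eq_Ioc ht.1.le ht.2]
    rw [hsplit]; ring
  have hI1 : ∫ z, F z ∂(μ.prod μ) = ∫ s in Set.Ioc (0:ℝ) T, h s * K s := by
    rw [integral_prod _ hFint]
    refine integral_congr_ae ?_
    filter_upwards [ae_restrict_mem measurableSet_Ioc] with s hs
    exact claim1 s hs
  have hI2 : ∫ z, F z ∂(μ.prod μ) = ∫ t in Set.Ioc (0:ℝ) T, (A - K t) * h t := by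
    rw [integral_prod_symm _ hFint]
    refine integral_congr_ae ?_
    filter_upwards [ae_restrict_mem measurableSet_Ioc] with t ht
    exact claim2 t ht
  -- integrability of the pieces
  have hgint : Integrable (fun t => (A - K t) * h t) μ := by
    refine (hFint.integral_prod_right).congr ?_
    filter_upwards [ae_restrict_mem measurableSet_Ioc] with t ht
    exact claim2 t ht
  have hhKint : Integrable (fun t => h t * K t) μ := by
    have : (fun t => h t * K t) = fun t => A * h t - (A - K t) * h t := by
      funext t; ring
    rw [this]
    exact (hh.const_mul A).sub hgint
  have hfinal : ∫ t in Set.Ioc (0:ℝ) T, h t * K t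
      = A * A - ∫ t in Set.Ioc (0:ℝ) T, (A - K t) * h t := by
    have : (fun t => h t * K t) = fun t => A * h t - (A - K t) * h t := by
      funext t; ring
    rw [this, integral_sub (hh.const_mul A) hgint, integral_const_mul]
  have : ∫ t in Set.Ioc (0:ℝ) T, (A - K t) * h t = ∫ s in Set.Ioc (0:ℝ) T, h s * K s := by
    rw [← hI2, hI1]
  rw [this] at hfinal
  refine ⟨hhKint, ?_⟩
  nlinarith [hfinal]

lemma sum_comm4 {M : Type*} [AddCommMonoid M] {a b c d : Type*}
    [Fintype a] [Fintype b] [Fintype c] [Fintype d] (f : a → b → c → d → M) :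
    ∑ j : a, ∑ l : b, ∑ k : c, ∑ i : d, f j l k i
      = ∑ k : c, ∑ i : d, ∑ j : a, ∑ l : b, f j l k i :=
  calc ∑ j : a, ∑ l : b, ∑ k : c, ∑ i : d, f j l k i
      = ∑ j : a, ∑ k : c, ∑ l : b, ∑ i : d, f j l k i :=
        Finset.sum_congr rfl fun j _ => Finset.sum_comm
    _ = ∑ k : c, ∑ j : a, ∑ l : b, ∑ i : d, f j l k i := Finset.sum_comm
    _ = ∑ k : c, ∑ j : a, ∑ i : d, ∑ l : b, f j l k i :=
        Finset.sum_congr rfl fun k _ => Finset.sum_congr rfl fun j _ => Finset.sum_comm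
    _ = ∑ k : c, ∑ i : d, ∑ j : a, ∑ l : b, f j l k i :=
        Finset.sum_congr rfl fun k _ => Finset.sum_comm


/-- If `v₁,…,vₙ : ℝ → ℝʳ` satisfy
`∑ᵢ ∫₀ᵀ ⟨vₖ(T), vᵢ(t)⟩² dt ≤ c‖vₖ(T)‖²` for all `T ≥ 0` and all `k`,
then `∑ᵢ ∫₀ᵀ ‖vᵢ(t)‖² dt ≤ 2rc` for all `T ≥ 0`. -/
theorem stmt7 (n r : ℕ) (v : Fin n → ℝ → (Fin r → ℝ)) (c : ℝ) (hc : 0 ≤ c)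
    (hint : ∀ i : Fin n, ∀ T : ℝ,
      IntervalIntegrable (fun t => v i t ⬝ᵥ v i t) volume 0 T)
    (hint2 : ∀ i k : Fin n, ∀ S T : ℝ,
      IntervalIntegrable (fun t => (v k S ⬝ᵥ v i t) ^ 2) volume 0 T)
    (hbound : ∀ T : ℝ, 0 ≤ T → ∀ k : Fin n,
      ∑ i : Fin n, ∫ t in (0:ℝ)..T, (v k T ⬝ᵥ v i t) ^ 2 ≤ c * (v k T ⬝ᵥ v k T)) :
    ∀ T : ℝ, 0 ≤ T →
      ∑ i : Fin n, ∫ t in (0:ℝ)..T, v i t ⬝ᵥ v i t ≤ 2 * r * c := by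
  intro T hT
  classical
  set μ := volume.restrict (Set.Ioc (0:ℝ) T) with hμ
  have hdot : ∀ i : Fin n, Integrable (fun t => v i t ⬝ᵥ v i t) μ := fun i =>
    (intervalIntegrable_iff_integrableOn_Ioc_of_le hT).1 (hint i T)
  have hm : ∀ i k : Fin n, ∀ S : ℝ, AEMeasurable (fun t => (v k S ⬝ᵥ v i t) ^ 2) μ :=
    fun i k S =>
      ((intervalIntegrable_iff_integrableOn_Ioc_of_le hT).1 (hint2 i k S T)).aemeasurable
  have hOmeas := entry_aemeas n r v μ hm
  have hentry_meas : ∀ (i : Fin n) (j l : Fin r),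
      AEMeasurable (fun t => v i t j * v i t l) μ := by
    intro i j l
    have hev : Measurable (fun X : Fin r → Fin r → ℝ => X j l) :=
      (measurable_pi_apply l).comp (measurable_pi_apply j)
    exact hev.comp_aemeasurable (hOmeas i)
  have habs : ∀ (a : Fin r → ℝ) (j l : Fin r), |a j * a l| ≤ a ⬝ᵥ a := by
    intro a j l
    have hj : a j * a j ≤ a ⬝ᵥ a :=
      Finset.single_le_sum (f := fun m => a m * a m)
        (fun m _ => mul_self_nonneg _) (Finset.mem_univ j)
    have hl : a l * a l ≤ a ⬝ᵥ a :=
      Finset.single_le_sum (f := fun m => a m * a m)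
        (fun m _ => mul_self_nonneg _) (Finset.mem_univ l)
    have habs2 : |a j * a l| ≤ (a j * a j + a l * a l) / 2 := by
      rw [abs_mul]
      nlinarith [sq_nonneg (|a j| - |a l|), abs_nonneg (a j), abs_nonneg (a l),
        sq_abs (a j), sq_abs (a l), abs_mul_abs_self (a j), abs_mul_abs_self (a l)]
    linarith
  have hentry_int : ∀ (i : Fin n) (j l : Fin r),
      Integrable (fun t => v i t j * v i t l) μ := by
    intro i j l
    refine Integrable.mono' (hdot i) (hentry_meas i j l).aestronglyMeasurable ?_
    refine Filter.Eventually.of_forall fun t => ?_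
    simpa [Real.norm_eq_abs, abs_mul] using habs (v i t) j l
  have hgoal_eq : ∀ i : Fin n,
      ∫ t in (0:ℝ)..T, v i t ⬝ᵥ v i t = ∫ t in Set.Ioc (0:ℝ) T, v i t ⬝ᵥ v i t :=
    fun i => intervalIntegral.integral_of_le hT
  set f := ∑ i : Fin n, ∫ t in Set.Ioc (0:ℝ) T, v i t ⬝ᵥ v i t with hf
  rw [show (∑ i : Fin n, ∫ t in (0:ℝ)..T, v i t ⬝ᵥ v i t) = f from
    Finset.sum_congr rfl fun i _ => hgoal_eq i]
  have hf0 : 0 ≤ f :=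
    Finset.sum_nonneg fun i _ => integral_nonneg fun t =>
      Finset.sum_nonneg fun m _ => mul_self_nonneg _
  set a : Fin r → Fin r → ℝ :=
    fun j l => ∑ i : Fin n, ∫ t in Set.Ioc (0:ℝ) T, v i t j * v i t l with ha
  have htrace : ∑ j : Fin r, a j j = f := by
    rw [hf, ha, Finset.sum_comm]
    refine Finset.sum_congr rfl fun i _ => ?_
    rw [← integral_finset_sum _ (fun j (_ : j ∈ Finset.univ) => hentry_int i j j)]
    rfl
  have hsum_int : ∀ j l : Fin r,
      Integrable (fun s => ∑ i : Fin n, v i s j * v i s l) μ :=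
    fun j l => integrable_finset_sum _ fun i _ => hentry_int i j l
  have hKey := fun (j l : Fin r) =>
    sq_integral_Ioc T (fun s => ∑ i : Fin n, v i s j * v i s l) (hsum_int j l)
  have haeq : ∀ j l : Fin r,
      a j l = ∫ s in Set.Ioc (0:ℝ) T, ∑ i : Fin n, v i s j * v i s l :=
    fun j l => (integral_finset_sum _ fun i _ => hentry_int i j l).symm
  have hsq_eq : ∑ j : Fin r, ∑ l : Fin r, (a j l) ^ 2
      = 2 * ∫ s in Set.Ioc (0:ℝ) T, ∑ j : Fin r, ∑ l : Fin r,
          (∑ i : Fin n, v i s j * v i s l)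
            * ∫ t in Set.Ioc (0:ℝ) s, ∑ i : Fin n, v i t j * v i t l := by
    have step1 : ∑ j : Fin r, ∑ l : Fin r, (a j l) ^ 2
        = ∑ j : Fin r, ∑ l : Fin r, 2 * ∫ s in Set.Ioc (0:ℝ) T,
            (∑ i : Fin n, v i s j * v i s l)
              * ∫ t in Set.Ioc (0:ℝ) s, ∑ i : Fin n, v i t j * v i t l :=
      Finset.sum_congr rfl fun j _ => Finset.sum_congr rfl fun l _ => by
        rw [haeq j l, (hKey j l).2]
    rw [step1]
    simp only [← Finset.mul_sum]
    congr 1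
    refine (Finset.sum_congr rfl fun j _ =>
      (integral_finset_sum _ fun l _ => (hKey j l).1).symm).trans ?_
    exact (integral_finset_sum _ fun j _ =>
      integrable_finset_sum _ fun l _ => (hKey j l).1).symm
  have hptwise : ∀ s ∈ Set.Ioc (0:ℝ) T,
      ∑ j : Fin r, ∑ l : Fin r, (∑ i : Fin n, v i s j * v i s l)
          * (∫ t in Set.Ioc (0:ℝ) s, ∑ i : Fin n, v i t j * v i t l)
        ≤ c * ∑ k : Fin n, v k s ⬝ᵥ v k s := by
    intro s hs
    have hsub : Set.Ioc (0:ℝ) s ⊆ Set.Ioc (0:ℝ) T := Set.Ioc_subset_Ioc_right hs.2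
    have hint_s : ∀ (i : Fin n) (j l : Fin r),
        IntegrableOn (fun t => v i t j * v i t l) (Set.Ioc (0:ℝ) s) volume :=
      fun i j l =>
        (show IntegrableOn (fun t => v i t j * v i t l) (Set.Ioc (0:ℝ) T) volume from
          hentry_int i j l).mono_set hsub
    have e1 : ∀ j l : Fin r,
        (∫ t in Set.Ioc (0:ℝ) s, ∑ i : Fin n, v i t j * v i t l)
          = ∑ i : Fin n, ∫ t in Set.Ioc (0:ℝ) s, v i t j * v i t l :=
      fun j l => integral_finset_sum _ fun i _ => hint_s i j l
    calc ∑ j : Fin r, ∑ l : Fin r, (∑ i : Fin n, v i s j * v i s l)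
            * (∫ t in Set.Ioc (0:ℝ) s, ∑ i : Fin n, v i t j * v i t l)
        = ∑ j : Fin r, ∑ l : Fin r, ∑ k : Fin n, ∑ i : Fin n,
            (v k s j * v k s l) * ∫ t in Set.Ioc (0:ℝ) s, v i t j * v i t l := by
          refine Finset.sum_congr rfl fun j _ => Finset.sum_congr rfl fun l _ => ?_
          rw [e1, Finset.sum_mul_sum]
      _ = ∑ k : Fin n, ∑ i : Fin n, ∑ j : Fin r, ∑ l : Fin r,
            (v k s j * v k s l) * ∫ t in Set.Ioc (0:ℝ) s, v i t j * v i t l :=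
          sum_comm4 _
      _ = ∑ k : Fin n, ∑ i : Fin n, ∫ t in Set.Ioc (0:ℝ) s, (v k s ⬝ᵥ v i t) ^ 2 := by
          refine Finset.sum_congr rfl fun k _ => Finset.sum_congr rfl fun i _ => ?_
          have e2 : ∀ j l : Fin r,
              (v k s j * v k s l) * ∫ t in Set.Ioc (0:ℝ) s, v i t j * v i t l
                = ∫ t in Set.Ioc (0:ℝ) s, (v k s j * v k s l) * (v i t j * v i t l) :=
            fun j l => (integral_const_mul _ _).symm
          simp only [e2]
          calc ∑ j : Fin r, ∑ l : Fin r,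
                  ∫ t in Set.Ioc (0:ℝ) s, (v k s j * v k s l) * (v i t j * v i t l)
              = ∑ j : Fin r, ∫ t in Set.Ioc (0:ℝ) s,
                  ∑ l : Fin r, (v k s j * v k s l) * (v i t j * v i t l) :=
                Finset.sum_congr rfl fun j _ =>
                  (integral_finset_sum _ fun l _ => (hint_s i j l).const_mul _).symm
            _ = ∫ t in Set.Ioc (0:ℝ) s,
                  ∑ j : Fin r, ∑ l : Fin r, (v k s j * v k s l) * (v i t j * v i t l) :=
                (integral_finset_sum _ fun j _ =>
                  integrable_finset_sum _ fun l _ => (hint_s i j l).const_mul _).symm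
            _ = ∫ t in Set.Ioc (0:ℝ) s, (v k s ⬝ᵥ v i t) ^ 2 := by
                refine integral_congr_ae (Filter.Eventually.of_forall fun t => ?_)
                show ∑ j : Fin r, ∑ l : Fin r, v k s j * v k s l * (v i t j * v i t l)
                  = (v k s ⬝ᵥ v i t) ^ 2
                rw [show v k s ⬝ᵥ v i t = ∑ j : Fin r, v k s j * v i t j from rfl,
                  sq, Finset.sum_mul_sum]
                exact Finset.sum_congr rfl fun j _ =>
                  Finset.sum_congr rfl fun l _ => by ring
      _ = ∑ k : Fin n, ∑ i : Fin n, ∫ t in (0:ℝ)..s, (v k s ⬝ᵥ v i t) ^ 2 := by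
          refine Finset.sum_congr rfl fun k _ => Finset.sum_congr rfl fun i _ => ?_
          rw [intervalIntegral.integral_of_le hs.1.le]
      _ ≤ ∑ k : Fin n, c * (v k s ⬝ᵥ v k s) :=
          Finset.sum_le_sum fun k _ => hbound s hs.1.le k
      _ = c * ∑ k : Fin n, v k s ⬝ᵥ v k s := by rw [Finset.mul_sum]
  have hmono : (∫ s in Set.Ioc (0:ℝ) T, ∑ j : Fin r, ∑ l : Fin r,
        (∑ i : Fin n, v i s j * v i s l)
          * ∫ t in Set.Ioc (0:ℝ) s, ∑ i : Fin n, v i t j * v i t l)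
      ≤ ∫ s in Set.Ioc (0:ℝ) T, c * ∑ k : Fin n, v k s ⬝ᵥ v k s := by
    refine integral_mono_ae
      (integrable_finset_sum _ fun j _ => integrable_finset_sum _ fun l _ => (hKey j l).1)
      ((integrable_finset_sum _ fun k _ => hdot k).const_mul c) ?_
    filter_upwards [ae_restrict_mem measurableSet_Ioc] with s hs using hptwise s hs
  have hC3 : ∑ j : Fin r, ∑ l : Fin r, (a j l) ^ 2 ≤ 2 * c * f := by
    rw [hsq_eq]
    have h2 : (∫ s in Set.Ioc (0:ℝ) T, c * ∑ k : Fin n, v k s ⬝ᵥ v k s) = c * f := by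
      rw [integral_const_mul, hf, integral_finset_sum _ fun k _ => hdot k]
    nlinarith [hmono]
  have hCS : f ^ 2 ≤ (∑ j : Fin r, ∑ l : Fin r, (a j l) ^ 2) * r := by
    have h2 := Finset.sum_mul_sq_le_sq_mul_sq Finset.univ (fun j : Fin r => a j j)
      (fun _ => (1:ℝ))
    have h3 : ∑ _j : Fin r, (1:ℝ) ^ 2 = r := by simp
    have h4 : ∑ j : Fin r, (a j j) ^ 2 ≤ ∑ j : Fin r, ∑ l : Fin r, (a j l) ^ 2 :=
      Finset.sum_le_sum fun j _ => Finset.single_le_sum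
        (f := fun l => (a j l) ^ 2) (fun l _ => sq_nonneg _) (Finset.mem_univ j)
    calc f ^ 2 = (∑ j : Fin r, a j j * 1) ^ 2 := by rw [← htrace]; simp
      _ ≤ (∑ j : Fin r, (a j j) ^ 2) * ∑ _j : Fin r, (1:ℝ) ^ 2 := h2
      _ = (∑ j : Fin r, (a j j) ^ 2) * r := by rw [h3]
      _ ≤ (∑ j : Fin r, ∑ l : Fin r, (a j l) ^ 2) * r :=
          mul_le_mul_of_nonneg_right h4 (Nat.cast_nonneg r)
  have hfin : f ^ 2 ≤ 2 * r * c * f := by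
    calc f ^ 2 ≤ (∑ j : Fin r, ∑ l : Fin r, (a j l) ^ 2) * r := hCS
      _ ≤ (2 * c * f) * r := mul_le_mul_of_nonneg_right hC3 (Nat.cast_nonneg r)
      _ = 2 * r * c * f := by ring
  rcases le_or_gt f 0 with hf' | hf'
  · have : (0:ℝ) ≤ 2 * r * c := by positivity
    linarith
  · nlinarith [hfin, hf']
end

section
/- Let Y be n×m, C an r×m matrix, Z n×r of full column rank with rank(YCᵀ) = r, and suppose (Y − ZW)Cᵀ = 0 and Zᵀ(Y − ZW) = 0 where W = (ZᵀZ)⁻¹ZᵀY. Let A = YCᵀ and B = (AᵀA)⁻¹AᵀY. Then ZW = AB. -/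
open Matrix

lemma isUnit_of_rank_eq {r : ℕ} (R : Matrix (Fin r) (Fin r) ℝ) (h : R.rank = r) :
    IsUnit R := by
  rw [← Matrix.mulVec_surjective_iff_isUnit]
  have : LinearMap.range R.mulVecLin = ⊤ := by
    apply Submodule.eq_top_of_finrank_eq
    rw [← Matrix.rank, h]
    simp [Module.finrank_pi]
  intro v
  have : v ∈ LinearMap.range R.mulVecLin := this ▸ Submodule.mem_top
  exact this

/-- Let `Z` be `n×r` of full column rank with `rank(YCᵀ) = r`,
`W = (ZᵀZ)⁻¹ZᵀY`, and suppose the stationarity equations `(Y − ZW)Cᵀ = 0` and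
`Zᵀ(Y − ZW) = 0` hold. With `A = YCᵀ` and `B = (AᵀA)⁻¹AᵀY`, we have `ZW = AB`. -/
theorem stmt11 (n m r : ℕ)
    (Y : Matrix (Fin n) (Fin m) ℝ) (C : Matrix (Fin r) (Fin m) ℝ)
    (Z : Matrix (Fin n) (Fin r) ℝ) (hZ : IsUnit (Zᵀ * Z))
    (hrank : (Y * Cᵀ).rank = r)
    (W : Matrix (Fin r) (Fin m) ℝ) (hW : W = (Zᵀ * Z)⁻¹ * Zᵀ * Y)
    (h1 : (Y - Z * W) * Cᵀ = 0) (h2 : Zᵀ * (Y - Z * W) = 0)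
    (A : Matrix (Fin n) (Fin r) ℝ) (hA : A = Y * Cᵀ)
    (B : Matrix (Fin r) (Fin m) ℝ) (hB : B = (Aᵀ * A)⁻¹ * Aᵀ * Y) :
    Z * W = A * B := by
  set R : Matrix (Fin r) (Fin r) ℝ := W * Cᵀ with hR
  have hAZ : A = Z * R := by
    have h1' : Y * Cᵀ - Z * W * Cᵀ = 0 := by rw [← Matrix.sub_mul]; exact h1
    rw [hA, sub_eq_zero.mp h1', Matrix.mul_assoc, hR]
  have hRunit : IsUnit R := by
    apply isUnit_of_rank_eq
    refine le_antisymm (by simpa using R.rank_le_width) ?_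
    calc r = A.rank := by rw [hA, hrank]
      _ ≤ R.rank := by rw [hAZ]; exact Matrix.rank_mul_le_right Z R
  have hdetR : IsUnit R.det := (Matrix.isUnit_iff_isUnit_det R).mp hRunit
  have hdetRt : IsUnit Rᵀ.det := by rwa [Matrix.det_transpose]
  have hAt : Aᵀ = Rᵀ * Zᵀ := by rw [hAZ, Matrix.transpose_mul]
  have hAtA : Aᵀ * A = Rᵀ * (Zᵀ * Z) * R := by
    rw [hAt, hAZ]; simp only [Matrix.mul_assoc]
  have hinv : (Aᵀ * A)⁻¹ = R⁻¹ * (Zᵀ * Z)⁻¹ * Rᵀ⁻¹ := by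
    rw [hAtA, Matrix.mul_inv_rev, Matrix.mul_inv_rev, Matrix.mul_assoc]
  have hB' : B = R⁻¹ * W := by
    rw [hB, hinv, hAt, hW]
    simp only [Matrix.mul_assoc]
    rw [Matrix.nonsing_inv_mul_cancel_left Rᵀ _ hdetRt]
  rw [hB', hAZ, Matrix.mul_assoc, Matrix.mul_nonsing_inv_cancel_left R W hdetR]
end

section
/- Under FA* dynamics with Z(0) full column rank, the total increase of the loss is bounded: for all T ≥ 0, ∫₀ᵀ (dℓ/dt)·𝟙[dℓ/dt ≥ 0] dt ≤ r·λᵣ(A(0))²·λ₁(Z(0)ᵀZ(0))², where ℓ(t) = ‖(Y − Ŷ(t))Cᵀ(Z(t)ᵀZ(t))^{-1/2}‖_F², A(0) is the initial alignment matrix, λᵣ its minimum eigenvalue, and λ₁(Z(0)ᵀZ(0)) the top eigenvalue of Z(0)ᵀZ(0). -/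
open Matrix MeasureTheory BigOperators
open scoped RealInnerProductSpace

namespace FA15



/-- entrywise matrix derivative at a point -/
def MHD {a b : ℕ} (F : ℝ → Matrix (Fin a) (Fin b) ℝ) (F' : Matrix (Fin a) (Fin b) ℝ)
    (t : ℝ) : Prop :=
  ∀ i j, HasDerivAt (fun s => F s i j) (F' i j) t

namespace MHD

lemma mul {a b c : ℕ} {F : ℝ → Matrix (Fin a) (Fin b) ℝ} {G : ℝ → Matrix (Fin b) (Fin c) ℝ}
    {F' G'} {t : ℝ} (hF : MHD F F' t) (hG : MHD G G' t) :
    MHD (fun s => F s * G s) (F' * G t + F t * G') t := by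
  intro i j
  have h : HasDerivAt (fun s => ∑ k, F s i k * G s k j)
      (∑ k, (F' i k * G t k j + F t i k * G' k j)) t :=
    HasDerivAt.fun_sum (fun k _ => (hF i k).fun_mul (hG k j))
  simpa only [Matrix.mul_apply, Matrix.add_apply, Finset.sum_add_distrib] using h

lemma transpose {a b : ℕ} {F : ℝ → Matrix (Fin a) (Fin b) ℝ} {F'} {t : ℝ}
    (hF : MHD F F' t) : MHD (fun s => (F s)ᵀ) F'ᵀ t := by
  intro i j
  simpa only [Matrix.transpose_apply] using hF j i

lemma const {a b : ℕ} (K : Matrix (Fin a) (Fin b) ℝ) (t : ℝ) :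
    MHD (fun _ => K) 0 t := fun i j => by
  simpa using hasDerivAt_const t (K i j)

lemma const_mul {a b c : ℕ} {F : ℝ → Matrix (Fin b) (Fin c) ℝ} {F'} {t : ℝ}
    (K : Matrix (Fin a) (Fin b) ℝ) (hF : MHD F F' t) :
    MHD (fun s => K * F s) (K * F') t := by
  have := (MHD.const K t).mul hF
  simpa using this

lemma mul_const {a b c : ℕ} {F : ℝ → Matrix (Fin a) (Fin b) ℝ} {F'} {t : ℝ}
    (hF : MHD F F' t) (K : Matrix (Fin b) (Fin c) ℝ) :
    MHD (fun s => F s * K) (F' * K) t := by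
  have := hF.mul (MHD.const K t)
  simpa using this

end MHD

/-- entrywise continuity -/
def MC {a b : ℕ} (F : ℝ → Matrix (Fin a) (Fin b) ℝ) : Prop :=
  ∀ i j, Continuous fun t => F t i j

namespace MC

lemma mul {a b c : ℕ} {F : ℝ → Matrix (Fin a) (Fin b) ℝ} {G : ℝ → Matrix (Fin b) (Fin c) ℝ}
    (hF : MC F) (hG : MC G) : MC (fun s => F s * G s) := by
  intro i j
  simp only [Matrix.mul_apply]
  exact continuous_finset_sum _ fun k _ => (hF i k).mul (hG k j)

lemma transpose {a b : ℕ} {F : ℝ → Matrix (Fin a) (Fin b) ℝ} (hF : MC F) :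
    MC (fun s => (F s)ᵀ) := fun i j => by
  simpa only [Matrix.transpose_apply] using hF j i

lemma const {a b : ℕ} (K : Matrix (Fin a) (Fin b) ℝ) : MC (fun _ => K) :=
  fun _ _ => continuous_const

lemma sub {a b : ℕ} {F G : ℝ → Matrix (Fin a) (Fin b) ℝ} (hF : MC F) (hG : MC G) :
    MC (fun s => F s - G s) := fun i j => by
  simpa only [Matrix.sub_apply] using (hF i j).fun_sub (hG i j)

lemma add {a b : ℕ} {F G : ℝ → Matrix (Fin a) (Fin b) ℝ} (hF : MC F) (hG : MC G) :
    MC (fun s => F s + G s) := fun i j => by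
  simpa only [Matrix.add_apply] using (hF i j).fun_add (hG i j)

lemma pow {a : ℕ} {F : ℝ → Matrix (Fin a) (Fin a) ℝ} (hF : MC F) (p : ℕ) :
    MC (fun s => F s ^ p) := by
  induction p with
  | zero => simpa [pow_zero] using MC.const (1 : Matrix (Fin a) (Fin a) ℝ)
  | succ q ih =>
      have := ih.mul hF
      simpa [pow_succ] using this

lemma trace {a : ℕ} {F : ℝ → Matrix (Fin a) (Fin a) ℝ} (hF : MC F) :
    Continuous fun t => (F t).trace := by
  simp only [Matrix.trace, Matrix.diag]
  exact continuous_finset_sum _ fun k _ => hF k k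

end MC

/-- matrix power entrywise derivative -/
lemma MHD.pow {a : ℕ} {F : ℝ → Matrix (Fin a) (Fin a) ℝ} {F'} {t : ℝ}
    (hF : MHD F F' t) (p : ℕ) :
    MHD (fun s => F s ^ p)
      (∑ i ∈ Finset.range p, F t ^ i * F' * F t ^ (p - 1 - i)) t := by
  induction p with
  | zero => simpa [pow_zero] using MHD.const (1 : Matrix (Fin a) (Fin a) ℝ) t
  | succ q ih =>
      have h := ih.mul hF
      have harr : (∑ i ∈ Finset.range q, F t ^ i * F' * F t ^ (q - 1 - i)) * F t
          + F t ^ q * F'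
          = ∑ i ∈ Finset.range (q+1), F t ^ i * F' * F t ^ (q - i) := by
        rw [Finset.sum_range_succ]
        congr 1
        · rw [Finset.sum_mul]
          refine Finset.sum_congr rfl fun i hi => ?_
          have hi' : i < q := Finset.mem_range.mp hi
          have h2 : q - i = (q-1-i)+1 := by omega
          rw [h2, pow_succ, Matrix.mul_assoc]
        · simp [Nat.sub_self]
      intro i j
      have := h i j
      simp only [← pow_succ] at this
      have hq : ∀ i', q + 1 - 1 - i' = q - i' := fun i' => by omega
      simp only [hq, ← harr]
      exact this

lemma hasDerivAt_trace_pow {a : ℕ} {F : ℝ → Matrix (Fin a) (Fin a) ℝ} {F'} {t : ℝ}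
    (hF : MHD F F' t) (p : ℕ) :
    HasDerivAt (fun s => (F s ^ (p+1)).trace) ((p+1 : ℝ) * (F t ^ p * F').trace) t := by
  have hD := hF.pow (p+1)
  have h : HasDerivAt (fun s => (F s ^ (p+1)).trace)
      ((∑ i ∈ Finset.range (p+1), F t ^ i * F' * F t ^ (p - i)).trace) t := by
    have := HasDerivAt.fun_sum (u := (Finset.univ : Finset (Fin a)))
      (fun k _ => by
        simpa using hD k k)
    simpa only [Matrix.trace, Matrix.diag, Matrix.sum_apply] using this
  convert h using 1
  rw [Matrix.trace_sum]
  have : ∀ i ∈ Finset.range (p+1),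
      (F t ^ i * F' * F t ^ (p - i)).trace = (F t ^ p * F').trace := by
    intro i hi
    have hi' : i < p + 1 := Finset.mem_range.mp hi
    rw [Matrix.trace_mul_cycle, ← pow_add]
    have h3 : p - i + i = p := by omega
    rw [h3]
  rw [Finset.sum_congr rfl this, Finset.sum_const]
  simp only [Finset.card_range, nsmul_eq_mul]
  push_cast
  ring




lemma trace_transpose_mul_self {a b : ℕ} (X : Matrix (Fin a) (Fin b) ℝ) :
    (Xᵀ * X).trace = ∑ i, ∑ j, (X i j)^2 := by
  simp only [Matrix.trace, Matrix.diag, Matrix.mul_apply, Matrix.transpose_apply, pow_two]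
  rw [Finset.sum_comm]

lemma trace_nonneg' {a : ℕ} {X : Matrix (Fin a) (Fin a) ℝ} (hX : X.PosSemidef) :
    0 ≤ X.trace := by
  have h : ∀ i, 0 ≤ X i i := by
    intro i
    have := hX.dotProduct_mulVec_nonneg (Pi.single i 1)
    simpa [dotProduct, Matrix.mulVec, Pi.single_apply, Finset.mul_sum,
      Finset.sum_ite_eq, Finset.sum_ite_eq'] using this
  exact Finset.sum_nonneg fun i _ => h i

lemma trace_mul_nonneg {a : ℕ} {X Y : Matrix (Fin a) (Fin a) ℝ}
    (hX : X.PosSemidef) (hY : Y.PosSemidef) : 0 ≤ (X * Y).trace := by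
  obtain ⟨p, B, hB⟩ : ∃ (p : ℕ) (B : Matrix (Fin p) (Fin a) ℝ), Y = Bᴴ * B := by
    obtain ⟨p, v, hv⟩ := Matrix.posSemidef_iff_eq_sum_vecMulVec.mp hY
    refine ⟨p, Matrix.of fun i j => v i j, ?_⟩
    rw [hv]; ext j k
    simp [Matrix.mul_apply, Matrix.vecMulVec_apply, Matrix.sum_apply]
  have h1 : (X * Y).trace = (B * X * Bᴴ).trace := by
    rw [hB, Matrix.trace_mul_comm]
    exact (Matrix.trace_mul_cycle B X Bᴴ).symm
  rw [h1]
  exact trace_nonneg' (hX.mul_mul_conjTranspose_same B)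

lemma dotProduct_self_nonneg' {a : ℕ} (v : Fin a → ℝ) : 0 ≤ v ⬝ᵥ v :=
  Finset.sum_nonneg fun i _ => mul_self_nonneg (v i)

section spectral

variable {k : ℕ} {H : Matrix (Fin k) (Fin k) ℝ} (hH : H.IsHermitian)

lemma star_coe_unitary : (star (hH.eigenvectorUnitary : Matrix (Fin k) (Fin k) ℝ))
    * (hH.eigenvectorUnitary : Matrix (Fin k) (Fin k) ℝ) = 1 :=
  Matrix.mem_unitaryGroup_iff'.mp (hH.eigenvectorUnitary).2

lemma coe_unitary_star : (hH.eigenvectorUnitary : Matrix (Fin k) (Fin k) ℝ)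
    * star (hH.eigenvectorUnitary : Matrix (Fin k) (Fin k) ℝ) = 1 :=
  Matrix.mem_unitaryGroup_iff.mp (hH.eigenvectorUnitary).2

lemma spectral_real : H = (hH.eigenvectorUnitary : Matrix (Fin k) (Fin k) ℝ)
    * Matrix.diagonal hH.eigenvalues
    * star (hH.eigenvectorUnitary : Matrix (Fin k) (Fin k) ℝ) := by
  have h := hH.spectral_theorem
  rw [Unitary.conjStarAlgAut_apply] at h
  have hd : (RCLike.ofReal ∘ hH.eigenvalues : Fin k → ℝ) = hH.eigenvalues := by funext i; simp
  rw [hd] at h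
  exact h

lemma conj_unitary_pow (U X : Matrix (Fin k) (Fin k) ℝ) (hU : star U * U = 1)
    (hU2 : U * star U = 1) (p : ℕ) :
    (U * X * star U) ^ p = U * X ^ p * star U := by
  induction p with
  | zero => simp [hU2]
  | succ q ih =>
      rw [pow_succ, ih, pow_succ]
      calc U * X ^ q * star U * (U * X * star U)
          = U * X ^ q * (star U * U) * X * star U := by
            simp only [Matrix.mul_assoc]
        _ = U * (X ^ q * X) * star U := by rw [hU]; simp only [Matrix.mul_one, Matrix.mul_assoc]

lemma trace_conj_unitary (U X : Matrix (Fin k) (Fin k) ℝ) (hU : star U * U = 1) :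
    (U * X * star U).trace = X.trace := by
  rw [Matrix.trace_mul_cycle, hU, Matrix.one_mul]

lemma smul_one_conj (U : Matrix (Fin k) (Fin k) ℝ) (hU2 : U * star U = 1) (μ : ℝ) :
    U * (μ • (1 : Matrix (Fin k) (Fin k) ℝ)) * star U = μ • 1 := by
  rw [Matrix.mul_smul, Matrix.mul_one, Matrix.smul_mul, hU2]

lemma sub_decomp {μ : ℝ} :
    (hH.eigenvectorUnitary : Matrix (Fin k) (Fin k) ℝ)
      * Matrix.diagonal (fun i => hH.eigenvalues i - μ)
      * star (hH.eigenvectorUnitary : Matrix (Fin k) (Fin k) ℝ)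
    = H - μ • 1 := by
  set U : Matrix (Fin k) (Fin k) ℝ := (hH.eigenvectorUnitary : Matrix (Fin k) (Fin k) ℝ)
  have hdiag : Matrix.diagonal (fun i => hH.eigenvalues i - μ)
      = Matrix.diagonal hH.eigenvalues - μ • (1 : Matrix (Fin k) (Fin k) ℝ) := by
    ext i j
    by_cases hij : i = j <;>
      simp [Matrix.diagonal_apply, Matrix.one_apply, hij, Matrix.sub_apply]
  rw [hdiag, Matrix.mul_sub, Matrix.sub_mul, smul_one_conj U (coe_unitary_star hH) μ,
    ← spectral_real hH]

lemma sub_decomp' {Λ : ℝ} :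
    (hH.eigenvectorUnitary : Matrix (Fin k) (Fin k) ℝ)
      * Matrix.diagonal (fun i => Λ - hH.eigenvalues i)
      * star (hH.eigenvectorUnitary : Matrix (Fin k) (Fin k) ℝ)
    = Λ • 1 - H := by
  set U : Matrix (Fin k) (Fin k) ℝ := (hH.eigenvectorUnitary : Matrix (Fin k) (Fin k) ℝ)
  have hdiag : Matrix.diagonal (fun i => Λ - hH.eigenvalues i)
      = Λ • (1 : Matrix (Fin k) (Fin k) ℝ) - Matrix.diagonal hH.eigenvalues := by
    ext i j
    by_cases hij : i = j <;>
      simp [Matrix.diagonal_apply, Matrix.one_apply, hij, Matrix.sub_apply]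
  rw [hdiag, Matrix.mul_sub, Matrix.sub_mul, smul_one_conj U (coe_unitary_star hH) Λ,
    ← spectral_real hH]

lemma quad_ge_of_eig {μ : ℝ} (h : ∀ i, μ ≤ hH.eigenvalues i) (w : Fin k → ℝ) :
    μ * (w ⬝ᵥ w) ≤ w ⬝ᵥ H *ᵥ w := by
  have hpsd : (H - μ • (1 : Matrix (Fin k) (Fin k) ℝ)).PosSemidef := by
    rw [← sub_decomp hH]
    have hd : Matrix.PosSemidef (Matrix.diagonal (fun i => hH.eigenvalues i - μ)) :=
      Matrix.PosSemidef.diagonal (fun i => by simpa using h i)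
    have := hd.mul_mul_conjTranspose_same
      (hH.eigenvectorUnitary : Matrix (Fin k) (Fin k) ℝ)
    rwa [← Matrix.star_eq_conjTranspose] at this
  have := hpsd.dotProduct_mulVec_nonneg w
  simp only [star_trivial] at this
  rw [Matrix.sub_mulVec, dotProduct_sub, Matrix.smul_mulVec,
    Matrix.one_mulVec, dotProduct_smul, smul_eq_mul] at this
  linarith

lemma quad_le_of_eig {Λ : ℝ} (h : ∀ i, hH.eigenvalues i ≤ Λ) (w : Fin k → ℝ) :
    w ⬝ᵥ H *ᵥ w ≤ Λ * (w ⬝ᵥ w) := by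
  have hpsd : (Λ • (1 : Matrix (Fin k) (Fin k) ℝ) - H).PosSemidef := by
    rw [← sub_decomp' hH]
    have hd : Matrix.PosSemidef (Matrix.diagonal (fun i => Λ - hH.eigenvalues i)) :=
      Matrix.PosSemidef.diagonal (fun i => by simpa using h i)
    have := hd.mul_mul_conjTranspose_same
      (hH.eigenvectorUnitary : Matrix (Fin k) (Fin k) ℝ)
    rwa [← Matrix.star_eq_conjTranspose] at this
  have := hpsd.dotProduct_mulVec_nonneg w
  simp only [star_trivial] at this
  rw [Matrix.sub_mulVec, dotProduct_sub, Matrix.smul_mulVec,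
    Matrix.one_mulVec, dotProduct_smul, smul_eq_mul] at this
  linarith

/-- eigenvalue lower bound from a quadratic-form bound -/
lemma eig_ge_of_quad {μ : ℝ} (h : ∀ w, μ * (w ⬝ᵥ w) ≤ w ⬝ᵥ H *ᵥ w) (i : Fin k) :
    μ ≤ hH.eigenvalues i := by
  set v : Fin k → ℝ := (WithLp.equiv 2 (Fin k → ℝ)) (hH.eigenvectorBasis i) with hv
  have hmv : H *ᵥ v = hH.eigenvalues i • v := hH.mulVec_eigenvectorBasis i
  have hnorm : v ⬝ᵥ v = 1 := by
    have h1 : ‖hH.eigenvectorBasis i‖ = 1 := hH.eigenvectorBasis.orthonormal.1 i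
    have h2 : (inner ℝ (hH.eigenvectorBasis i) (hH.eigenvectorBasis i) : ℝ) = 1 := by
      rw [real_inner_self_eq_norm_sq, h1]; norm_num
    rw [← h2]
    simp only [PiLp.inner_apply, dotProduct, hv, RCLike.inner_apply,
      conj_trivial]
    rfl
  have := h v
  rw [hmv, dotProduct_smul, smul_eq_mul, hnorm, mul_one, mul_one] at this
  exact this

lemma eig_le_of_quad {Λ : ℝ} (h : ∀ w, w ⬝ᵥ H *ᵥ w ≤ Λ * (w ⬝ᵥ w)) (i : Fin k) :
    hH.eigenvalues i ≤ Λ := by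
  set v : Fin k → ℝ := (WithLp.equiv 2 (Fin k → ℝ)) (hH.eigenvectorBasis i) with hv
  have hmv : H *ᵥ v = hH.eigenvalues i • v := hH.mulVec_eigenvectorBasis i
  have hnorm : v ⬝ᵥ v = 1 := by
    have h1 : ‖hH.eigenvectorBasis i‖ = 1 := hH.eigenvectorBasis.orthonormal.1 i
    have h2 : (inner ℝ (hH.eigenvectorBasis i) (hH.eigenvectorBasis i) : ℝ) = 1 := by
      rw [real_inner_self_eq_norm_sq, h1]; norm_num
    rw [← h2]
    simp only [PiLp.inner_apply, dotProduct, hv, RCLike.inner_apply,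
      conj_trivial]
    rfl
  have := h v
  rw [hmv, dotProduct_smul, smul_eq_mul, hnorm, mul_one, mul_one] at this
  exact this

lemma key_psd {μ Λ c : ℝ} (κ : ℕ)
    (hlb : ∀ i, μ ≤ hH.eigenvalues i) (hub : ∀ i, hH.eigenvalues i ≤ Λ)
    (hscal : ∀ x, μ ≤ x → x ≤ Λ → 0 ≤ x + 2*c*(Λ - x)^κ) :
    (H + (2*c) • ((Λ • (1 : Matrix (Fin k) (Fin k) ℝ) - H) ^ κ)).PosSemidef := by
  set U : Matrix (Fin k) (Fin k) ℝ := (hH.eigenvectorUnitary : Matrix (Fin k) (Fin k) ℝ)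
    with hUdef
  have hU : star U * U = 1 := star_coe_unitary hH
  have hU2 : U * star U = 1 := coe_unitary_star hH
  have hpow : (Λ • (1 : Matrix (Fin k) (Fin k) ℝ) - H) ^ κ
      = U * Matrix.diagonal (fun i => (Λ - hH.eigenvalues i)^κ) * star U := by
    rw [← sub_decomp' hH, conj_unitary_pow U _ hU hU2, Matrix.diagonal_pow]
    congr 2
  have hdd : Matrix.diagonal (fun i => hH.eigenvalues i + 2*c*(Λ - hH.eigenvalues i)^κ)
      = Matrix.diagonal hH.eigenvalues
        + (2*c) • Matrix.diagonal (fun i => (Λ - hH.eigenvalues i)^κ) := by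
    ext i j
    by_cases hij : i = j <;>
      simp [Matrix.diagonal_apply, hij, Matrix.add_apply, mul_comm]
  have hdecomp : H + (2*c) • ((Λ • (1 : Matrix (Fin k) (Fin k) ℝ) - H) ^ κ)
      = U * Matrix.diagonal (fun i => hH.eigenvalues i + 2*c*(Λ - hH.eigenvalues i)^κ)
        * star U := by
    rw [hdd, Matrix.mul_add, Matrix.add_mul]
    congr 1
    · exact spectral_real hH
    · rw [hpow, Matrix.mul_smul, Matrix.smul_mul]
  rw [hdecomp]
  have hd : Matrix.PosSemidef
      (Matrix.diagonal (fun i => hH.eigenvalues i + 2*c*(Λ - hH.eigenvalues i)^κ)) :=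
    Matrix.PosSemidef.diagonal (fun i => hscal _ (hlb i) (hub i))
  have := hd.mul_mul_conjTranspose_same U
  rwa [← Matrix.star_eq_conjTranspose] at this

lemma trace_pow_eq (p : ℕ) : (H ^ p).trace = ∑ i, (hH.eigenvalues i) ^ p := by
  set U : Matrix (Fin k) (Fin k) ℝ := (hH.eigenvectorUnitary : Matrix (Fin k) (Fin k) ℝ)
  have hU : star U * U = 1 := star_coe_unitary hH
  have hU2 : U * star U = 1 := coe_unitary_star hH
  calc (H ^ p).trace
      = ((U * Matrix.diagonal hH.eigenvalues * star U) ^ p).trace := by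
        rw [← spectral_real hH]
    _ = (U * (Matrix.diagonal hH.eigenvalues) ^ p * star U).trace := by
        rw [conj_unitary_pow U _ hU hU2]
    _ = ((Matrix.diagonal hH.eigenvalues) ^ p).trace := trace_conj_unitary U _ hU
    _ = ∑ i, (hH.eigenvalues i) ^ p := by
        rw [Matrix.diagonal_pow, Matrix.trace_diagonal]
        simp [Pi.pow_apply]

end spectral



lemma conjT_eq_T {a b : ℕ} (X : Matrix (Fin a) (Fin b) ℝ) : Xᴴ = Xᵀ := by
  ext i j
  simp [Matrix.conjTranspose_apply]

lemma psd_transpose_mul_self {a b : ℕ} (X : Matrix (Fin a) (Fin b) ℝ) :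
    (Xᵀ * X).PosSemidef := by
  rw [← conjT_eq_T]
  exact Matrix.posSemidef_conjTranspose_mul_self X

lemma isHermitian_of_transpose_eq {a : ℕ} {X : Matrix (Fin a) (Fin a) ℝ} (h : Xᵀ = X) :
    X.IsHermitian := by
  rw [Matrix.IsHermitian, conjT_eq_T]
  exact h

lemma quad_XtX_nonneg {a b : ℕ} (X : Matrix (Fin a) (Fin b) ℝ) (w : Fin b → ℝ) :
    0 ≤ w ⬝ᵥ (Xᵀ * X) *ᵥ w := by
  have h1 : (Xᵀ * X) *ᵥ w = Xᵀ *ᵥ (X *ᵥ w) := by rw [Matrix.mulVec_mulVec]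
  have h2 : w ⬝ᵥ (Xᵀ *ᵥ (X *ᵥ w)) = (X *ᵥ w) ⬝ᵥ (X *ᵥ w) := by
    rw [Matrix.dotProduct_mulVec, ← Matrix.transpose_transpose X,
      Matrix.vecMul_transpose, Matrix.transpose_transpose]
  rw [h1, h2]
  exact dotProduct_self_nonneg' _

lemma hasDerivAt_quad {k : ℕ} {F : ℝ → Matrix (Fin k) (Fin k) ℝ}
    {D : Matrix (Fin k) (Fin k) ℝ} {t : ℝ}
    (h : ∀ i j, HasDerivAt (fun s => F s i j) (D i j) t) (w : Fin k → ℝ) :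
    HasDerivAt (fun s => w ⬝ᵥ (F s) *ᵥ w) (w ⬝ᵥ D *ᵥ w) t := by
  have hsum : HasDerivAt (fun s => ∑ i, w i * (∑ j, F s i j * w j))
      (∑ i, w i * (∑ j, D i j * w j)) t :=
    HasDerivAt.fun_sum fun i _ =>
      ((HasDerivAt.fun_sum fun j _ => (h i j).mul_const (w j)).const_mul (w i))
  simpa only [dotProduct, Matrix.mulVec] using hsum

lemma scalar_key {μ Λ : ℝ} (hμ : μ < 0) (hΛ : 0 ≤ Λ) (κ : ℕ)
    (hκ : (κ : ℝ) ≤ (Λ - μ)/(-μ)) :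
    ∀ x, μ ≤ x → x ≤ Λ → 0 ≤ x + 2*((-μ/2)/(Λ-μ)^κ)*(Λ - x)^κ := by
  intro x hx hxΛ
  have hΛμ : 0 < Λ - μ := by linarith
  have hpowpos : 0 < (Λ - μ)^κ := pow_pos hΛμ κ
  rcases le_or_gt 0 x with hx0 | hx0
  · have h0 : 0 ≤ 2*((-μ/2)/(Λ-μ)^κ)*(Λ - x)^κ := by
      have hc : 0 ≤ (-μ/2)/(Λ-μ)^κ := div_nonneg (by linarith) (le_of_lt hpowpos)
      have : (0:ℝ) ≤ (Λ - x)^κ := pow_nonneg (by linarith) κ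
      nlinarith
    linarith
  · set u := (x - μ)/(Λ - μ) with hu
    have hu0 : 0 ≤ u := div_nonneg (by linarith) (le_of_lt hΛμ)
    have hΛx : Λ - x = (Λ - μ)*(1 - u) := by
      rw [hu]
      field_simp
      ring
    have hu1 : u ≤ 1 := by
      rw [hu, div_le_one hΛμ]
      linarith
    have hbern : 1 - (κ:ℝ)*u ≤ (1-u)^κ := by
      have := one_add_mul_le_pow (a := -u) (by linarith : (-2:ℝ) ≤ -u) κ
      calc 1 - (κ:ℝ)*u = 1 + (κ:ℝ)*(-u) := by ring
        _ ≤ (1 + -u)^κ := this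
        _ = (1-u)^κ := by ring_nf
    have h2c : 2*((-μ/2)/(Λ-μ)^κ)*(Λ - x)^κ = (-μ)*(1-u)^κ := by
      rw [hΛx, mul_pow]
      field_simp
    rw [h2c]
    have h3 : (-μ)*(1 - (κ:ℝ)*u) ≤ (-μ)*(1-u)^κ :=
      mul_le_mul_of_nonneg_left hbern (by linarith)
    have h4 : (-μ)*((κ:ℝ)*u) ≤ x - μ := by
      have hfrac : (-μ)*(κ:ℝ)/(Λ-μ) ≤ 1 := by
        rw [div_le_one hΛμ]
        have := (le_div_iff₀ (by linarith : (0:ℝ) < -μ)).mp hκ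
        linarith
      have hxmu : 0 ≤ x - μ := by linarith
      calc (-μ)*((κ:ℝ)*u) = (x - μ) * ((-μ)*(κ:ℝ)/(Λ-μ)) := by
            rw [hu]
            ring
        _ ≤ (x - μ) * 1 := mul_le_mul_of_nonneg_left hfrac hxmu
        _ = x - μ := mul_one _
    nlinarith



lemma gram_const {n m r : ℕ}
    (Y : Matrix (Fin n) (Fin m) ℝ) (C : Matrix (Fin r) (Fin m) ℝ)
    (Z : ℝ → Matrix (Fin n) (Fin r) ℝ)
    (hZ0 : IsUnit ((Z 0)ᵀ * Z 0))
    (W : ℝ → Matrix (Fin r) (Fin m) ℝ)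
    (hW : ∀ t, W t = ((Z t)ᵀ * Z t)⁻¹ * (Z t)ᵀ * Y)
    (R : ℝ → Matrix (Fin n) (Fin r) ℝ)
    (hR : ∀ t, R t = (Y - Z t * W t) * Cᵀ)
    (hdyn : ∀ t : ℝ, ∀ i j, HasDerivAt (fun s => Z s i j) ((R t) i j) t) :
    ∀ t, (Z t)ᵀ * Z t = (Z 0)ᵀ * Z 0 := by
  -- the key algebraic cancellation
  have hZR : ∀ t, IsUnit (((Z t)ᵀ * Z t).det) → (Z t)ᵀ * R t = 0 := by
    intro t ht
    rw [hR t, hW t]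
    have key : (Z t)ᵀ * Z t * (((Z t)ᵀ * Z t)⁻¹ * ((Z t)ᵀ * Y)) = (Z t)ᵀ * Y :=
      Matrix.mul_nonsing_inv_cancel_left _ _ ht
    calc (Z t)ᵀ * ((Y - Z t * (((Z t)ᵀ * Z t)⁻¹ * (Z t)ᵀ * Y)) * Cᵀ)
        = ((Z t)ᵀ * Y - (Z t)ᵀ * Z t * (((Z t)ᵀ * Z t)⁻¹ * ((Z t)ᵀ * Y))) * Cᵀ := by
          simp only [Matrix.mul_sub, Matrix.sub_mul, Matrix.mul_assoc]
      _ = 0 := by rw [key, sub_self, Matrix.zero_mul]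
  -- continuity of Z entries
  have hZc : ∀ i j, Continuous fun t => Z t i j := by
    intro i j
    have hdiff : Differentiable ℝ fun t => Z t i j := fun t => (hdyn t i j).differentiableAt
    exact hdiff.continuous
  have hGc : Continuous fun t => (Z t)ᵀ * Z t := by
    apply continuous_matrix
    intro i j
    simp only [Matrix.mul_apply, Matrix.transpose_apply]
    exact continuous_finset_sum _ fun k _ => (hZc k i).mul (hZc k j)
  -- derivative of the Gram entries
  have hGd : ∀ t i j, HasDerivAt (fun s => ((Z s)ᵀ * Z s) i j)
      (((R t)ᵀ * Z t + (Z t)ᵀ * R t) i j) t := by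
    intro t i j
    have h : HasDerivAt (fun s => ∑ k, Z s k i * Z s k j)
        (∑ k, (R t k i * Z t k j + Z t k i * R t k j)) t :=
      HasDerivAt.fun_sum fun k _ => (hdyn t k i).fun_mul (hdyn t k j)
    simpa only [Matrix.mul_apply, Matrix.transpose_apply, Matrix.add_apply,
      Finset.sum_add_distrib] using h
  set V : Set ℝ := {t | (Z t)ᵀ * Z t = (Z 0)ᵀ * Z 0} with hV
  have hclosed : IsClosed V := isClosed_eq hGc continuous_const
  have hdet0 : IsUnit (((Z 0)ᵀ * Z 0).det) := (Matrix.isUnit_iff_isUnit_det _).mp hZ0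
  have hopen : IsOpen V := by
    rw [Metric.isOpen_iff]
    intro t₀ ht₀
    have ht₀' : ((Z t₀)ᵀ * Z t₀).det ≠ 0 := by
      have : (Z t₀)ᵀ * Z t₀ = (Z 0)ᵀ * Z 0 := ht₀
      rw [this]
      exact hdet0.ne_zero
    have hOopen : IsOpen {t : ℝ | ((Z t)ᵀ * Z t).det ≠ 0} := by
      have : Continuous fun t => ((Z t)ᵀ * Z t).det := hGc.matrix_det
      exact isOpen_compl_iff.mpr (isClosed_eq this continuous_const)
    obtain ⟨ε, hε, hball⟩ := Metric.isOpen_iff.mp hOopen t₀ ht₀'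
    refine ⟨ε, hε, ?_⟩
    intro s hs
    have hmem : ∀ u ∈ Set.uIcc t₀ s, ((Z u)ᵀ * Z u).det ≠ 0 := by
      intro u hu
      apply hball
      exact (convex_ball t₀ ε).ordConnected.uIcc_subset (Metric.mem_ball_self hε) hs hu
    have hconst : ∀ i j, ((Z s)ᵀ * Z s) i j = ((Z t₀)ᵀ * Z t₀) i j := by
      intro i j
      rcases le_total t₀ s with hts | hts
      · have := constant_of_has_deriv_right_zero
          (f := fun u => ((Z u)ᵀ * Z u) i j) (a := t₀) (b := s)
          (fun u hu => (Continuous.continuousOn (by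
            simp only [Matrix.mul_apply, Matrix.transpose_apply]
            exact continuous_finset_sum _ fun k _ => (hZc k i).mul (hZc k j))) u hu)
          (fun u hu => by
            have hu' : u ∈ Set.uIcc t₀ s := by
              rw [Set.uIcc_of_le hts]
              exact Set.mem_Icc_of_Ico hu
            have hzero : ((R u)ᵀ * Z u + (Z u)ᵀ * R u) i j = 0 := by
              have h1 : (Z u)ᵀ * R u = 0 := hZR u (isUnit_iff_ne_zero.mpr (hmem u hu'))
              have h2 : (R u)ᵀ * Z u = 0 := by
                have := congrArg Matrix.transpose h1
                simpa [Matrix.transpose_mul] using this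
              rw [h1, h2]
              simp
            have := hGd u i j
            rw [hzero] at this
            exact this.hasDerivWithinAt)
        exact this s (Set.right_mem_Icc.mpr hts)
      · have := constant_of_has_deriv_right_zero
          (f := fun u => ((Z u)ᵀ * Z u) i j) (a := s) (b := t₀)
          (fun u hu => (Continuous.continuousOn (by
            simp only [Matrix.mul_apply, Matrix.transpose_apply]
            exact continuous_finset_sum _ fun k _ => (hZc k i).mul (hZc k j))) u hu)
          (fun u hu => by
            have hu' : u ∈ Set.uIcc t₀ s := by
              rw [Set.uIcc_of_ge hts]
              exact Set.mem_Icc_of_Ico hu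
            have hzero : ((R u)ᵀ * Z u + (Z u)ᵀ * R u) i j = 0 := by
              have h1 : (Z u)ᵀ * R u = 0 := hZR u (isUnit_iff_ne_zero.mpr (hmem u hu'))
              have h2 : (R u)ᵀ * Z u = 0 := by
                have := congrArg Matrix.transpose h1
                simpa [Matrix.transpose_mul] using this
              rw [h1, h2]
              simp
            have := hGd u i j
            rw [hzero] at this
            exact this.hasDerivWithinAt)
        have hs' := this t₀ (Set.right_mem_Icc.mpr hts)
        simpa using hs'.symm
    have : (Z s)ᵀ * Z s = (Z t₀)ᵀ * Z t₀ := by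
      ext i j
      exact hconst i j
    show s ∈ V
    rw [hV, Set.mem_setOf_eq, this]
    exact ht₀
  have huniv : V = Set.univ :=
    IsClopen.eq_univ ⟨hclosed, hopen⟩ ⟨0, by simp [hV]⟩
  intro t
  have : t ∈ V := by rw [huniv]; trivial
  exact this


lemma MHD.const_sub {a b : ℕ} {F : ℝ → Matrix (Fin a) (Fin b) ℝ} {F'} {t : ℝ}
    (K : Matrix (Fin a) (Fin b) ℝ) (hF : MHD F F' t) :
    MHD (fun s => K - F s) (-F') t := by
  intro i j
  have := (hasDerivAt_const t (K i j)).fun_sub (hF i j)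
  simpa [Matrix.sub_apply, Matrix.neg_apply] using this

lemma quad_transpose {k : ℕ} (M : Matrix (Fin k) (Fin k) ℝ) (w : Fin k → ℝ) :
    w ⬝ᵥ Mᵀ *ᵥ w = w ⬝ᵥ M *ᵥ w := by
  rw [Matrix.dotProduct_mulVec, Matrix.vecMul_transpose, dotProduct_comm]

lemma dot_mulVec_self {a b : ℕ} (X : Matrix (Fin a) (Fin b) ℝ) (w : Fin b → ℝ) :
    (X *ᵥ w) ⬝ᵥ (X *ᵥ w) = w ⬝ᵥ (Xᵀ * X) *ᵥ w := by
  have h1 : (Xᵀ * X) *ᵥ w = Xᵀ *ᵥ (X *ᵥ w) := by rw [Matrix.mulVec_mulVec]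
  have h2 : w ⬝ᵥ (Xᵀ *ᵥ (X *ᵥ w)) = (X *ᵥ w) ⬝ᵥ (X *ᵥ w) := by
    rw [Matrix.dotProduct_mulVec, ← Matrix.transpose_transpose X,
      Matrix.vecMul_transpose, Matrix.transpose_transpose]
  rw [h1, h2]

lemma ZR_zero {n m r : ℕ} {Y : Matrix (Fin n) (Fin m) ℝ} {C : Matrix (Fin r) (Fin m) ℝ}
    {Zt : Matrix (Fin n) (Fin r) ℝ} (ht : IsUnit ((Ztᵀ * Zt).det)) :
    Ztᵀ * ((Y - Zt * ((Ztᵀ * Zt)⁻¹ * Ztᵀ * Y)) * Cᵀ) = 0 := by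
  have key : Ztᵀ * Zt * ((Ztᵀ * Zt)⁻¹ * (Ztᵀ * Y)) = Ztᵀ * Y :=
    Matrix.mul_nonsing_inv_cancel_left _ _ ht
  calc Ztᵀ * ((Y - Zt * ((Ztᵀ * Zt)⁻¹ * Ztᵀ * Y)) * Cᵀ)
      = (Ztᵀ * Y - Ztᵀ * Zt * ((Ztᵀ * Zt)⁻¹ * (Ztᵀ * Y))) * Cᵀ := by
        simp only [Matrix.mul_sub, Matrix.sub_mul, Matrix.mul_assoc]
    _ = 0 := by rw [key, sub_self, Matrix.zero_mul]

end FA15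

set_option maxHeartbeats 2000000 in
/-- Under FA* dynamics with `Z(0)` full column rank, the total
increase of the loss `ℓ(t) = ‖(Y − Ŷ(t))Cᵀ (Z(t)ᵀZ(t))^{-1/2}‖_F²` is bounded:
for all `T ≥ 0`, `∫₀ᵀ (dℓ/dt)·𝟙[dℓ/dt ≥ 0] dt ≤ r·λᵣ(A(0))²·λ₁(Z(0)ᵀZ(0))²`.
Here `S` is the PSD square root of `(Z(0)ᵀZ(0))⁻¹` (recall `ZᵀZ` is constant
along the flow), `A` is the alignment matrix, `λᵣ` the minimum and `λ₁` the
maximum eigenvalue. -/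
theorem stmt15 (n m r : ℕ)
    (Y : Matrix (Fin n) (Fin m) ℝ) (C : Matrix (Fin r) (Fin m) ℝ)
    (Z : ℝ → Matrix (Fin n) (Fin r) ℝ)
    (hZ0 : IsUnit ((Z 0)ᵀ * Z 0))
    (W : ℝ → Matrix (Fin r) (Fin m) ℝ)
    (hW : ∀ t, W t = ((Z t)ᵀ * Z t)⁻¹ * (Z t)ᵀ * Y)
    (R : ℝ → Matrix (Fin n) (Fin r) ℝ)
    (hR : ∀ t, R t = (Y - Z t * W t) * Cᵀ)
    (A : ℝ → Matrix (Fin r) (Fin r) ℝ)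
    (hA : ∀ t, A t = ((Z t)ᵀ * Z t)⁻¹ * C * (W t)ᵀ + W t * Cᵀ * ((Z t)ᵀ * Z t)⁻¹)
    (hdyn : ∀ t : ℝ, ∀ i j, HasDerivAt (fun s => Z s i j) ((R t) i j) t)
    (S : Matrix (Fin r) (Fin r) ℝ) (hS : S.PosSemidef)
    (hSsq : S * S = (((Z 0)ᵀ * Z 0))⁻¹)
    (ℓ : ℝ → ℝ) (hℓ : ∀ t, ℓ t = ∑ i, ∑ j, ((R t * S) i j) ^ 2)
    (hA0Herm : (A 0).IsHermitian) (hZ0Herm : (((Z 0)ᵀ * Z 0)).IsHermitian)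
    (lamr lam1 : ℝ)
    (hlamr : lamr = ⨅ i, hA0Herm.eigenvalues i)
    (hlam1 : lam1 = ⨆ i, hZ0Herm.eigenvalues i)
    (hint : ∀ T : ℝ, IntervalIntegrable
      (fun t => deriv ℓ t * (if 0 ≤ deriv ℓ t then 1 else 0)) volume 0 T) :
    ∀ T : ℝ, 0 ≤ T →
      (∫ t in (0:ℝ)..T, deriv ℓ t * (if 0 ≤ deriv ℓ t then 1 else 0))
        ≤ r * lamr ^ 2 * lam1 ^ 2 := by
  intro T hT
  classical
  -- Gram constancy
  have hGm : ∀ t, (Z t)ᵀ * Z t = (Z 0)ᵀ * Z 0 := FA15.gram_const Y C Z hZ0 W hW R hR hdyn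
  have hdet0 : IsUnit ((Z 0)ᵀ * Z 0).det := (Matrix.isUnit_iff_isUnit_det _).mp hZ0
  have hdet : ∀ t, IsUnit (((Z t)ᵀ * Z t).det) := fun t => by rw [hGm t]; exact hdet0
  -- S facts
  have hSsymm : Sᵀ = S := by
    have h1 := hS.1
    rw [Matrix.IsHermitian, FA15.conjT_eq_T] at h1
    exact h1
  have hdetS : IsUnit S.det := by
    have h1 : S.det * S.det = ((Z 0)ᵀ * Z 0)⁻¹.det := by rw [← Matrix.det_mul, hSsq]
    have h2 : ((Z 0)ᵀ * Z 0)⁻¹.det ≠ 0 := by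
      rw [Matrix.det_nonsing_inv, Ring.inverse_eq_inv']
      exact inv_ne_zero hdet0.ne_zero
    have h3 : S.det ≠ 0 := by
      intro h
      rw [h, mul_zero] at h1
      exact h2 h1.symm
    exact isUnit_iff_ne_zero.mpr h3
  have hSS' : S * S⁻¹ = 1 := Matrix.mul_nonsing_inv _ hdetS
  have hS'S : S⁻¹ * S = 1 := Matrix.nonsing_inv_mul _ hdetS
  have hG0inv : ((Z 0)ᵀ * Z 0)⁻¹ = S * S := hSsq.symm
  have hG0eq : (Z 0)ᵀ * Z 0 = S⁻¹ * S⁻¹ := by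
    rw [← Matrix.mul_inv_rev, hSsq, Matrix.nonsing_inv_nonsing_inv _ hdet0]
  have hSG0S : S * ((Z 0)ᵀ * Z 0) * S = 1 := by
    rw [hG0eq]
    calc S * (S⁻¹ * S⁻¹) * S = (S * S⁻¹) * (S⁻¹ * S) := by
          simp only [Matrix.mul_assoc]
      _ = 1 := by rw [hSS', hS'S, Matrix.mul_one]
  have hS'symm : S⁻¹ᵀ = S⁻¹ := by rw [Matrix.transpose_nonsing_inv, hSsymm]
  -- whitened objects
  set K : Matrix (Fin n) (Fin r) ℝ := Y * Cᵀ * S with hK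
  set N : ℝ → Matrix (Fin r) (Fin r) ℝ := fun t => (Z t * S)ᵀ * K with hN
  set Mh : ℝ → Matrix (Fin r) (Fin r) ℝ := fun t => (R t * S)ᵀ * (R t * S) with hMh
  set Ah : ℝ → Matrix (Fin r) (Fin r) ℝ := fun t => (N t)ᵀ + N t with hAh
  have hZSZS : ∀ t, (Z t * S)ᵀ * (Z t * S) = 1 := by
    intro t
    calc (Z t * S)ᵀ * (Z t * S) = S * (((Z t)ᵀ * Z t) * S) := by
          rw [Matrix.transpose_mul, hSsymm]
          simp only [Matrix.mul_assoc]
      _ = 1 := by rw [hGm t, ← Matrix.mul_assoc]; exact hSG0S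
  have hZR : ∀ t, (Z t)ᵀ * R t = 0 := by
    intro t
    rw [hR t, hW t]
    exact FA15.ZR_zero (hdet t)
  have hRtZ : ∀ t, (R t)ᵀ * Z t = 0 := by
    intro t
    have h := congrArg Matrix.transpose (hZR t)
    simpa [Matrix.transpose_mul] using h
  have hF2 : ∀ t, (R t)ᵀ * (R t * S) = (R t)ᵀ * K := by
    intro t
    have hRS : R t * S = Y * (Cᵀ * S) - Z t * (W t * (Cᵀ * S)) := by
      rw [hR t]
      simp only [Matrix.sub_mul, Matrix.mul_assoc]
    rw [hRS, Matrix.mul_sub]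
    have h0 : (R t)ᵀ * (Z t * (W t * (Cᵀ * S))) = 0 := by
      rw [← Matrix.mul_assoc, hRtZ t, Matrix.zero_mul]
    rw [h0, sub_zero, hK, Matrix.mul_assoc]
  have hMh_eq : ∀ t, S * ((R t)ᵀ * K) = Mh t := by
    intro t
    simp only [hMh]
    calc S * ((R t)ᵀ * K) = S * ((R t)ᵀ * (R t * S)) := by rw [hF2 t]
      _ = (R t * S)ᵀ * (R t * S) := by
          rw [Matrix.transpose_mul, hSsymm, Matrix.mul_assoc]
  have hMhsymm : ∀ t, (Mh t)ᵀ = Mh t := by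
    intro t
    simp only [hMh]
    rw [Matrix.transpose_mul, Matrix.transpose_transpose]
  have hMhPSD : ∀ t, (Mh t).PosSemidef := by
    intro t
    simp only [hMh]
    exact FA15.psd_transpose_mul_self _
  have hMhquad : ∀ t w, 0 ≤ w ⬝ᵥ (Mh t) *ᵥ w := by
    intro t w
    simp only [hMh]
    exact FA15.quad_XtX_nonneg _ w
  have hAhHerm : ∀ t, (Ah t).IsHermitian := by
    intro t
    apply FA15.isHermitian_of_transpose_eq
    simp only [hAh]
    rw [Matrix.transpose_add, Matrix.transpose_transpose, add_comm]
  have hAhT : ∀ t, (Ah t)ᵀ = Ah t := by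
    intro t
    have h := hAhHerm t
    rw [Matrix.IsHermitian, FA15.conjT_eq_T] at h
    exact h
  -- derivative of N is Mh
  have hMHD_N : ∀ t, ∀ i j, HasDerivAt (fun s => N s i j) (Mh t i j) t := by
    intro t
    have h1 : FA15.MHD Z (R t) t := hdyn t
    have h2 := ((h1.mul_const S).transpose).mul_const K
    have h3 : (R t * S)ᵀ * K = Mh t := by
      rw [Matrix.transpose_mul, hSsymm, Matrix.mul_assoc]
      exact hMh_eq t
    intro i j
    have h4 := h2 i j
    rw [h3] at h4
    simpa only [hN] using h4
  -- derivative of Ah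
  have hMHD_Ah : ∀ t, ∀ i j, HasDerivAt (fun s => Ah s i j) ((Mh t + Mh t) i j) t := by
    intro t i j
    have ha : HasDerivAt (fun s => N s j i) (Mh t j i) t := hMHD_N t j i
    have hb : HasDerivAt (fun s => N s i j) (Mh t i j) t := hMHD_N t i j
    have h1 := ha.add hb
    have hsym : Mh t j i = Mh t i j := by
      have h := congrFun (congrFun (hMhsymm t) i) j
      simpa [Matrix.transpose_apply] using h
    rw [hsym] at h1
    simp only [hAh, Matrix.add_apply, Matrix.transpose_apply]
    exact h1
  -- quadratic forms are monotone in t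
  have hmono : ∀ (w : Fin r → ℝ) (t : ℝ), 0 ≤ t →
      w ⬝ᵥ (Ah 0) *ᵥ w ≤ w ⬝ᵥ (Ah t) *ᵥ w := by
    intro w t ht0
    have hder : ∀ s, HasDerivAt (fun u => w ⬝ᵥ (Ah u) *ᵥ w) (w ⬝ᵥ (Mh s + Mh s) *ᵥ w) s :=
      fun s => FA15.hasDerivAt_quad (hMHD_Ah s) w
    have hdiff : Differentiable ℝ (fun u => w ⬝ᵥ (Ah u) *ᵥ w) :=
      fun s => (hder s).differentiableAt
    have hnn : ∀ s, 0 ≤ deriv (fun u => w ⬝ᵥ (Ah u) *ᵥ w) s := by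
      intro s
      rw [(hder s).deriv]
      have h1 : 0 ≤ w ⬝ᵥ (Mh s) *ᵥ w := hMhquad s w
      have h2 : w ⬝ᵥ (Mh s + Mh s) *ᵥ w = w ⬝ᵥ (Mh s) *ᵥ w + w ⬝ᵥ (Mh s) *ᵥ w := by
        rw [Matrix.add_mulVec, dotProduct_add]
      rw [h2]
      linarith
    exact monotone_of_deriv_nonneg hdiff hnn ht0
  -- the loss identity and derivative
  have hlid : ∀ t, ℓ t = (Kᵀ * K).trace - ∑ i, ∑ j, (N t i j)^2 := by
    intro t
    rw [hℓ t]
    have h1 : ∑ i, ∑ j, ((R t * S) i j)^2 = (Mh t).trace := by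
      simp only [hMh]
      exact (FA15.trace_transpose_mul_self (R t * S)).symm
    have h2 : Mh t = Kᵀ * K - (N t)ᵀ * N t := by
      have e1 : Mh t = S * ((R t)ᵀ * K) := (hMh_eq t).symm
      rw [e1, hR t, hW t, hGm t, hG0inv]
      simp only [hN, hK, Matrix.transpose_mul, Matrix.transpose_sub,
        Matrix.transpose_transpose, hSsymm, Matrix.mul_sub, Matrix.sub_mul,
        Matrix.mul_assoc]
    rw [h1, h2, Matrix.trace_sub, FA15.trace_transpose_mul_self, FA15.trace_transpose_mul_self]
  have hderivL : ∀ t, HasDerivAt ℓ (-(((Ah t) * (Mh t)).trace)) t := by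
    intro t
    have hfun : ℓ = fun u => (Kᵀ * K).trace - ∑ i, ∑ j, (N u i j)^2 := funext hlid
    rw [hfun]
    have hsum : HasDerivAt (fun u => ∑ i, ∑ j, (N u i j)^2)
        (∑ i, ∑ j, 2 * N t i j * Mh t i j) t := by
      apply HasDerivAt.fun_sum
      intro i _
      apply HasDerivAt.fun_sum
      intro j _
      have h := (hMHD_N t i j).fun_pow 2
      simpa using h
    have hD := (hasDerivAt_const t ((Kᵀ * K).trace)).fun_sub hsum
    have htr : ((Ah t) * (Mh t)).trace = ∑ i, ∑ j, 2 * N t i j * Mh t i j := by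
      have hsymE : ∀ i j, Mh t j i = Mh t i j := by
        intro i j
        have h := congrFun (congrFun (hMhsymm t) i) j
        simpa [Matrix.transpose_apply] using h
      have hAhm : (Ah t) * (Mh t) = (N t)ᵀ * Mh t + N t * Mh t := by
        simp only [hAh, Matrix.add_mul]
      rw [hAhm, Matrix.trace_add]
      have h1 : ((N t)ᵀ * Mh t).trace = ∑ i, ∑ j, N t i j * Mh t i j := by
        simp only [Matrix.trace, Matrix.diag, Matrix.mul_apply, Matrix.transpose_apply]
        rw [Finset.sum_comm]
      have h2 : (N t * Mh t).trace = ∑ i, ∑ j, N t i j * Mh t i j := by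
        simp only [Matrix.trace, Matrix.diag, Matrix.mul_apply]
        refine Finset.sum_congr rfl fun i _ => Finset.sum_congr rfl fun j _ => ?_
        rw [hsymE j i]
      rw [h1, h2, ← Finset.sum_add_distrib]
      refine (Finset.sum_congr rfl fun i _ => ?_).symm
      rw [← Finset.sum_add_distrib]
      refine Finset.sum_congr rfl fun j _ => ?_
      ring
    rw [htr]
    simpa using hD
  have hderiv : ∀ t, deriv ℓ t = -(((Ah t) * (Mh t)).trace) := fun t => (hderivL t).deriv
  -- conjugation identity at time 0
  have hSAS : S * (Ah 0) * S = A 0 := by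
    rw [hA 0, hW 0, hG0inv]
    simp only [hAh, hN, hK, Matrix.transpose_mul, Matrix.transpose_transpose, hSsymm,
      Matrix.mul_add, Matrix.add_mul, Matrix.mul_assoc]
  have hconj : ∀ w : Fin r → ℝ,
      w ⬝ᵥ (Ah 0) *ᵥ w = (S⁻¹ *ᵥ w) ⬝ᵥ (A 0) *ᵥ (S⁻¹ *ᵥ w) := by
    intro w
    rw [← hSAS]
    have e1 : (S * Ah 0 * S) *ᵥ (S⁻¹ *ᵥ w) = S *ᵥ ((Ah 0) *ᵥ w) := by
      rw [Matrix.mulVec_mulVec]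
      have h1 : S * Ah 0 * S * S⁻¹ = S * Ah 0 := by
        rw [Matrix.mul_assoc (S * Ah 0) S S⁻¹, hSS', Matrix.mul_one]
      rw [h1, ← Matrix.mulVec_mulVec]
    have e2 : (S⁻¹ *ᵥ w) ᵥ* S = w := by
      rw [← Matrix.transpose_transpose S, Matrix.vecMul_transpose, Matrix.transpose_transpose,
        hSsymm, Matrix.mulVec_mulVec, hSS', Matrix.one_mulVec]
    rw [e1]
    conv_rhs => rw [Matrix.dotProduct_mulVec, e2]
  -- uniform upper bound on quadratic form of Ah
  set q : ℝ := ∑ i, ∑ j, (K i j)^2 with hq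
  have hq0 : 0 ≤ q := Finset.sum_nonneg fun i _ => Finset.sum_nonneg fun j _ => sq_nonneg _
  set Λ : ℝ := 2*(1+q) with hΛdef
  have hΛ0 : 0 < Λ := by rw [hΛdef]; linarith
  have hupper : ∀ t, ∀ w : Fin r → ℝ, w ⬝ᵥ (Ah t) *ᵥ w ≤ Λ * (w ⬝ᵥ w) := by
    intro t w
    have hww : 0 ≤ w ⬝ᵥ w := FA15.dotProduct_self_nonneg' w
    have hNw : w ⬝ᵥ (N t) *ᵥ w = ((Z t * S) *ᵥ w) ⬝ᵥ (K *ᵥ w) := by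
      simp only [hN]
      rw [← Matrix.mulVec_mulVec, Matrix.dotProduct_mulVec,
        ← Matrix.transpose_transpose (Z t * S), Matrix.vecMul_transpose,
        Matrix.transpose_transpose]
    have hsplit : w ⬝ᵥ (Ah t) *ᵥ w
        = 2 * (((Z t * S) *ᵥ w) ⬝ᵥ (K *ᵥ w)) := by
      have h0 : w ⬝ᵥ (Ah t) *ᵥ w = w ⬝ᵥ (N t)ᵀ *ᵥ w + w ⬝ᵥ (N t) *ᵥ w := by
        simp only [hAh]
        rw [Matrix.add_mulVec, dotProduct_add]
      rw [h0, FA15.quad_transpose, hNw]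
      ring
    have haa : ((Z t * S) *ᵥ w) ⬝ᵥ ((Z t * S) *ᵥ w) = w ⬝ᵥ w := by
      rw [FA15.dot_mulVec_self, hZSZS t, Matrix.one_mulVec]
    have hbb : (K *ᵥ w) ⬝ᵥ (K *ᵥ w) ≤ q * (w ⬝ᵥ w) := by
      have h1 : (K *ᵥ w) ⬝ᵥ (K *ᵥ w) = ∑ i, (∑ j, K i j * w j)^2 := by
        simp [dotProduct, Matrix.mulVec, pow_two]
      have h2 : ∀ i : Fin n, (∑ j, K i j * w j)^2
          ≤ (∑ j, (K i j)^2) * (∑ j, (w j)^2) :=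
        fun i => Finset.sum_mul_sq_le_sq_mul_sq Finset.univ _ _
      have h3 : w ⬝ᵥ w = ∑ j, (w j)^2 := by
        simp [dotProduct, pow_two]
      rw [h1, h3, hq, Finset.sum_mul]
      exact Finset.sum_le_sum fun i _ => h2 i
    have hcs : (((Z t * S) *ᵥ w) ⬝ᵥ (K *ᵥ w))^2
        ≤ (((Z t * S) *ᵥ w) ⬝ᵥ ((Z t * S) *ᵥ w)) * ((K *ᵥ w) ⬝ᵥ (K *ᵥ w)) := by
      have h1 := Finset.sum_mul_sq_le_sq_mul_sq Finset.univ ((Z t * S) *ᵥ w) (K *ᵥ w)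
      simpa [dotProduct, pow_two] using h1
    have hab : ((Z t * S) *ᵥ w) ⬝ᵥ (K *ᵥ w) ≤ (1+q) * (w ⬝ᵥ w) := by
      have habs2 : (((Z t * S) *ᵥ w) ⬝ᵥ (K *ᵥ w))^2 ≤ ((1+q) * (w ⬝ᵥ w))^2 := by
        rw [haa] at hcs
        have hstep : (w ⬝ᵥ w) * ((K *ᵥ w) ⬝ᵥ (K *ᵥ w)) ≤ (w ⬝ᵥ w) * (q * (w ⬝ᵥ w)) :=
          mul_le_mul_of_nonneg_left hbb hww
        have hq2 : (w ⬝ᵥ w) * (q * (w ⬝ᵥ w)) ≤ ((1+q) * (w ⬝ᵥ w))^2 := by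
          nlinarith [sq_nonneg (w ⬝ᵥ w), hq0, mul_nonneg hq0 (mul_nonneg hww hww),
            mul_nonneg (mul_nonneg hq0 hq0) (mul_nonneg hww hww)]
        linarith
      exact le_of_pow_le_pow_left₀ two_ne_zero
        (mul_nonneg (by linarith) hww) habs2
    rw [hsplit, hΛdef]
    linarith
  -- main case split
  by_cases hcase : ∀ w : Fin r → ℝ, 0 ≤ w ⬝ᵥ (Ah 0) *ᵥ w
  · -- loss is non-increasing; the integrand is ≤ 0
    have hle : ∀ t ∈ Set.Icc (0:ℝ) T,
        deriv ℓ t * (if 0 ≤ deriv ℓ t then 1 else 0) ≤ (fun _ => (0:ℝ)) t := by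
      intro t ht
      have hpsd : (Ah t).PosSemidef :=
        Matrix.PosSemidef.of_dotProduct_mulVec_nonneg (hAhHerm t) fun x => by
          simpa [star_trivial] using le_trans (hcase x) (hmono x t ht.1)
      have h1 : 0 ≤ ((Ah t) * (Mh t)).trace := FA15.trace_mul_nonneg hpsd (hMhPSD t)
      have h2 : deriv ℓ t ≤ 0 := by rw [hderiv t]; linarith
      by_cases hd : 0 ≤ deriv ℓ t
      · simp only [hd, if_pos, mul_one]
        linarith
      · simp [hd]
    have hmint := intervalIntegral.integral_mono_on hT (hint T)
      (intervalIntegrable_const) hle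
    have h0 : (∫ _ in (0:ℝ)..T, (0:ℝ)) = 0 := by simp
    have hrhs : (0:ℝ) ≤ r * lamr ^ 2 * lam1 ^ 2 := by positivity
    calc (∫ t in (0:ℝ)..T, deriv ℓ t * (if 0 ≤ deriv ℓ t then 1 else 0))
        ≤ ∫ _ in (0:ℝ)..T, (0:ℝ) := hmint
      _ = 0 := h0
      _ ≤ r * lamr ^ 2 * lam1 ^ 2 := hrhs
  · -- the interesting case
    push_neg at hcase
    obtain ⟨w₀, hw₀⟩ := hcase
    have hrpos : 0 < r := by
      by_contra h
      have hr0 : r = 0 := by omega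
      subst hr0
      have hzero : w₀ ⬝ᵥ (Ah 0) *ᵥ w₀ = 0 := by
        simp [dotProduct]
      rw [hzero] at hw₀
      exact lt_irrefl _ hw₀
    haveI : Nonempty (Fin r) := ⟨⟨0, hrpos⟩⟩
    have hlamr_le : ∀ i, lamr ≤ hA0Herm.eigenvalues i := by
      intro i
      rw [hlamr]
      exact ciInf_le (Set.Finite.bddBelow (Set.finite_range _)) i
    have hlam1_ge : ∀ i, hZ0Herm.eigenvalues i ≤ lam1 := by
      intro i
      rw [hlam1]
      exact le_ciSup (Set.Finite.bddAbove (Set.finite_range _)) i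
    have hA0quad : ∀ u, lamr * (u ⬝ᵥ u) ≤ u ⬝ᵥ (A 0) *ᵥ u :=
      FA15.quad_ge_of_eig hA0Herm hlamr_le
    have hlamr_neg : lamr < 0 := by
      by_contra hge
      push_neg at hge
      have h1 := hA0quad (S⁻¹ *ᵥ w₀)
      rw [← hconj w₀] at h1
      have h2 : 0 ≤ lamr * ((S⁻¹ *ᵥ w₀) ⬝ᵥ (S⁻¹ *ᵥ w₀)) :=
        mul_nonneg hge (FA15.dotProduct_self_nonneg' _)
      linarith
    have hG0quad : ∀ w, w ⬝ᵥ ((Z 0)ᵀ * Z 0) *ᵥ w ≤ lam1 * (w ⬝ᵥ w) :=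
      FA15.quad_le_of_eig hZ0Herm hlam1_ge
    have hlam1_pos : 0 < lam1 := by
      have hnn : ∀ i, 0 ≤ hZ0Herm.eigenvalues i := fun i =>
        (FA15.psd_transpose_mul_self (Z 0)).eigenvalues_nonneg i
      by_contra hle'
      push_neg at hle'
      have hall0 : ∀ i, hZ0Herm.eigenvalues i = 0 := by
        intro i
        have := hlam1_ge i
        have := hnn i
        linarith
      have hdet' : ((Z 0)ᵀ * Z 0).det = 0 := by
        have h := hZ0Herm.det_eq_prod_eigenvalues
        rw [h]
        refine Finset.prod_eq_zero (Finset.mem_univ (⟨0, hrpos⟩ : Fin r)) ?_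
        simp [hall0]
      exact hdet0.ne_zero hdet'
    set μ : ℝ := lamr * lam1 with hμdef
    have hμneg : μ < 0 := mul_neg_of_neg_of_pos hlamr_neg hlam1_pos
    have hμΛ : μ < Λ := lt_trans hμneg hΛ0
    have hlow0 : ∀ w : Fin r → ℝ, μ * (w ⬝ᵥ w) ≤ w ⬝ᵥ (Ah 0) *ᵥ w := by
      intro w
      rw [hconj w]
      have h1 : lamr * ((S⁻¹ *ᵥ w) ⬝ᵥ (S⁻¹ *ᵥ w)) ≤ (S⁻¹ *ᵥ w) ⬝ᵥ (A 0) *ᵥ (S⁻¹ *ᵥ w) :=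
        hA0quad _
    -- u⬝u = w⬝G0w
      have h2 : (S⁻¹ *ᵥ w) ⬝ᵥ (S⁻¹ *ᵥ w) = w ⬝ᵥ ((Z 0)ᵀ * Z 0) *ᵥ w := by
        rw [FA15.dot_mulVec_self, hS'symm, ← hG0eq]
      have h3 : lamr * (lam1 * (w ⬝ᵥ w)) ≤ lamr * (w ⬝ᵥ ((Z 0)ᵀ * Z 0) *ᵥ w) :=
        mul_le_mul_of_nonpos_left (hG0quad w) (le_of_lt hlamr_neg)
      rw [h2] at h1
      calc μ * (w ⬝ᵥ w) = lamr * (lam1 * (w ⬝ᵥ w)) := by rw [hμdef]; ring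
        _ ≤ lamr * (w ⬝ᵥ ((Z 0)ᵀ * Z 0) *ᵥ w) := h3
        _ ≤ (S⁻¹ *ᵥ w) ⬝ᵥ (A 0) *ᵥ (S⁻¹ *ᵥ w) := h1
    have hlowt : ∀ t, 0 ≤ t → ∀ w, μ * (w ⬝ᵥ w) ≤ w ⬝ᵥ (Ah t) *ᵥ w :=
      fun t ht w => le_trans (hlow0 w) (hmono w t ht)
    -- exponent and coefficient
    set κ : ℕ := ⌊(Λ - μ)/(-μ)⌋₊ with hκdef
    have hratio_pos : 0 < (Λ - μ)/(-μ) := div_pos (by linarith) (by linarith)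
    have hκ1 : (κ:ℝ) ≤ (Λ - μ)/(-μ) := Nat.floor_le (le_of_lt hratio_pos)
    have hκ2 : (Λ - μ)/(-μ) < (κ:ℝ)+1 := Nat.lt_floor_add_one _
    set c : ℝ := (-μ/2)/(Λ-μ)^κ with hcdef
    have hΛμpow : 0 < (Λ-μ)^κ := pow_pos (by linarith) κ
    have hcpos : 0 < c := div_pos (by linarith) hΛμpow
    have hscal := FA15.scalar_key hμneg (le_of_lt hΛ0) κ hκ1
    -- Lyapunov function
    set B : ℝ → Matrix (Fin r) (Fin r) ℝ := fun t => Λ • 1 - Ah t with hB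
    set g : ℝ → ℝ := fun t => -(c/((κ:ℝ)+1)) * ((B t)^(κ+1)).trace with hg
    set g' : ℝ → ℝ := fun t => 2*c*(((B t)^κ) * (Mh t)).trace with hg'
    have hBT : ∀ t, (B t)ᵀ = B t := by
      intro t
      simp only [hB]
      rw [Matrix.transpose_sub, Matrix.transpose_smul, Matrix.transpose_one, hAhT t]
    have hBherm : ∀ t, (B t).IsHermitian := fun t => FA15.isHermitian_of_transpose_eq (hBT t)
    have hBMHD : ∀ t, ∀ i j, HasDerivAt (fun s => B s i j) ((-(Mh t + Mh t)) i j) t := by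
      intro t
      have h1 : FA15.MHD Ah (Mh t + Mh t) t := hMHD_Ah t
      have h2 := FA15.MHD.const_sub (Λ • 1) h1
      intro i j
      simpa only [hB] using h2 i j
    have hκne : ((κ:ℝ)+1) ≠ 0 := by positivity
    have hgd : ∀ t, HasDerivAt g (g' t) t := by
      intro t
      have h1 := FA15.hasDerivAt_trace_pow (F := B) (F' := -(Mh t + Mh t)) (t := t)
        (hBMHD t) κ
      have h2 := h1.const_mul (-(c/((κ:ℝ)+1)))
      have hval : -(c/((κ:ℝ)+1)) * (((κ:ℝ)+1) * ((B t ^ κ) * -(Mh t + Mh t)).trace)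
          = g' t := by
        simp only [hg']
        rw [Matrix.mul_neg, Matrix.trace_neg, Matrix.mul_add, Matrix.trace_add]
        field_simp
        ring
      rw [hval] at h2
      simp only [hg]
      exact h2
    -- quadratic form bounds for B
    have hBquad : ∀ t, ∀ w, 0 ≤ w ⬝ᵥ (B t) *ᵥ w := by
      intro t w
      have h1 := hupper t w
      simp only [hB]
      rw [Matrix.sub_mulVec, dotProduct_sub, Matrix.smul_mulVec,
        Matrix.one_mulVec, dotProduct_smul, smul_eq_mul]
      linarith
    have hBquad_ub : ∀ t, 0 ≤ t → ∀ w, w ⬝ᵥ (B t) *ᵥ w ≤ (Λ - μ) * (w ⬝ᵥ w) := by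
      intro t ht w
      have h1 := hlowt t ht w
      simp only [hB]
      rw [Matrix.sub_mulVec, dotProduct_sub, Matrix.smul_mulVec,
        Matrix.one_mulVec, dotProduct_smul, smul_eq_mul]
      linarith
    have hBpsd : ∀ t, (B t).PosSemidef := fun t =>
      Matrix.PosSemidef.of_dotProduct_mulVec_nonneg (hBherm t) fun x => by simpa [star_trivial] using hBquad t x
    have hAh_eig_lb : ∀ t, 0 ≤ t → ∀ i, μ ≤ (hAhHerm t).eigenvalues i := fun t ht =>
      FA15.eig_ge_of_quad (hAhHerm t) (hlowt t ht)
    have hAh_eig_ub : ∀ t, ∀ i, (hAhHerm t).eigenvalues i ≤ Λ := fun t =>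
      FA15.eig_le_of_quad (hAhHerm t) (hupper t)
    -- pointwise comparison
    have hpoint : ∀ t ∈ Set.Icc (0:ℝ) T,
        deriv ℓ t * (if 0 ≤ deriv ℓ t then 1 else 0) ≤ g' t := by
      intro t ht
      have hBexp : B t = Λ • (1 : Matrix (Fin r) (Fin r) ℝ) - Ah t := by simp only [hB]
      have hkey : (Ah t + (2*c) • ((B t)^κ)).PosSemidef := by
        rw [hBexp]
        exact FA15.key_psd (hAhHerm t) κ (hAh_eig_lb t ht.1) (hAh_eig_ub t) hscal
      have hBk : (B t ^ κ).PosSemidef := (hBpsd t).pow κ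
      have h0 : 0 ≤ g' t := by
        simp only [hg']
        exact mul_nonneg (by linarith) (FA15.trace_mul_nonneg hBk (hMhPSD t))
      have h1 : deriv ℓ t ≤ g' t := by
        rw [hderiv t]
        have h2 : 0 ≤ ((Ah t + (2*c) • ((B t)^κ)) * Mh t).trace :=
          FA15.trace_mul_nonneg hkey (hMhPSD t)
        rw [Matrix.add_mul, Matrix.trace_add, Matrix.smul_mul, Matrix.trace_smul,
          smul_eq_mul] at h2
        simp only [hg']
        linarith
      by_cases hd : 0 ≤ deriv ℓ t
      · simpa [hd] using h1
      · simpa [hd] using h0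
    -- continuity of g'
    have hZc : ∀ i j, Continuous fun t => Z t i j := by
      intro i j
      have hdiff : Differentiable ℝ fun t => Z t i j := fun t => (hdyn t i j).differentiableAt
      exact hdiff.continuous
    have hMCZ : FA15.MC Z := hZc
    have hRfun : R = fun t => (Y - Z t * (((Z 0)ᵀ * Z 0)⁻¹ * (Z t)ᵀ * Y)) * Cᵀ := by
      funext t
      rw [hR t, hW t, hGm t]
    have hMCR : FA15.MC R := by
      rw [hRfun]
      exact ((FA15.MC.const Y).sub (hMCZ.mul
        (((FA15.MC.const (((Z 0)ᵀ * Z 0)⁻¹)).mul hMCZ.transpose).mul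
          (FA15.MC.const Y)))).mul (FA15.MC.const Cᵀ)
    have hMCMh : FA15.MC Mh := by
      simp only [hMh]
      exact ((hMCR.mul (FA15.MC.const S)).transpose).mul (hMCR.mul (FA15.MC.const S))
    have hMCN : FA15.MC N := by
      simp only [hN]
      exact ((hMCZ.mul (FA15.MC.const S)).transpose).mul (FA15.MC.const K)
    have hMCAh : FA15.MC Ah := by
      simp only [hAh]
      exact (hMCN.transpose).add hMCN
    have hMCB : FA15.MC B := by
      simp only [hB]
      exact (FA15.MC.const (Λ • 1)).sub hMCAh
    have hg'cont : Continuous g' := by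
      simp only [hg']
      exact continuous_const.mul (((hMCB.pow κ).mul hMCMh).trace)
    have hg'int : IntervalIntegrable g' volume 0 T := hg'cont.intervalIntegrable 0 T
    have hFTC : (∫ t in (0:ℝ)..T, g' t) = g T - g 0 :=
      intervalIntegral.integral_eq_sub_of_hasDerivAt (fun t _ => hgd t) hg'int
    have hmonoInt := intervalIntegral.integral_mono_on hT (hint T) hg'int hpoint
    -- budget
    have hB0_eig_lb : ∀ i, 0 ≤ (hBherm 0).eigenvalues i := by
      intro i
      have h := FA15.eig_ge_of_quad (hBherm 0) (μ := 0) (fun w => by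
        rw [zero_mul]
        exact hBquad 0 w) i
      exact h
    have hB0_eig_ub : ∀ i, (hBherm 0).eigenvalues i ≤ Λ - μ :=
      FA15.eig_le_of_quad (hBherm 0) (hBquad_ub 0 le_rfl)
    have hBT_eig_lb : ∀ i, 0 ≤ (hBherm T).eigenvalues i :=
      FA15.eig_ge_of_quad (hBherm T) (μ := 0) (fun w => by
        rw [zero_mul]
        exact hBquad T w)
    have htr0 : ((B 0)^(κ+1)).trace ≤ (r:ℝ) * (Λ-μ)^(κ+1) := by
      rw [FA15.trace_pow_eq (hBherm 0) (κ+1)]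
      have hbound : ∀ i : Fin r, ((hBherm 0).eigenvalues i)^(κ+1) ≤ (Λ-μ)^(κ+1) :=
        fun i => pow_le_pow_left₀ (hB0_eig_lb i) (hB0_eig_ub i) _
      calc ∑ i, ((hBherm 0).eigenvalues i)^(κ+1)
          ≤ ∑ _i : Fin r, (Λ-μ)^(κ+1) := Finset.sum_le_sum fun i _ => hbound i
        _ = (r:ℝ) * (Λ-μ)^(κ+1) := by
            rw [Finset.sum_const, Finset.card_univ, Fintype.card_fin, nsmul_eq_mul]
    have htrT : 0 ≤ ((B T)^(κ+1)).trace := by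
      rw [FA15.trace_pow_eq (hBherm T) (κ+1)]
      exact Finset.sum_nonneg fun i _ => pow_nonneg (hBT_eig_lb i) _
    have hbudget : g T - g 0 ≤ (r:ℝ) * μ^2 := by
      simp only [hg]
      have hc1 : 0 < c/((κ:ℝ)+1) := by positivity
      have e : -(c/((κ:ℝ)+1)) * ((B T)^(κ+1)).trace - -(c/((κ:ℝ)+1)) * ((B 0)^(κ+1)).trace
          = (c/((κ:ℝ)+1)) * (((B 0)^(κ+1)).trace - ((B T)^(κ+1)).trace) := by ring
      rw [e]
      have h1 : ((B 0)^(κ+1)).trace - ((B T)^(κ+1)).trace ≤ (r:ℝ)*(Λ-μ)^(κ+1) := by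
        linarith
      have h2 : (c/((κ:ℝ)+1)) * (((B 0)^(κ+1)).trace - ((B T)^(κ+1)).trace)
          ≤ (c/((κ:ℝ)+1)) * ((r:ℝ)*(Λ-μ)^(κ+1)) :=
        mul_le_mul_of_nonneg_left h1 (le_of_lt hc1)
      have h3 : (c/((κ:ℝ)+1)) * ((r:ℝ)*(Λ-μ)^(κ+1))
          = (r:ℝ) * ((-μ)/2 * ((Λ-μ)/((κ:ℝ)+1))) := by
        rw [hcdef, pow_succ]
        field_simp
      have hfr : (Λ-μ)/((κ:ℝ)+1) ≤ 2*(-μ) := by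
        rw [div_le_iff₀ (by positivity : (0:ℝ) < (κ:ℝ)+1)]
        have h4 := (div_lt_iff₀ (by linarith : (0:ℝ) < -μ)).mp hκ2
        nlinarith
      have h5 : (-μ)/2 * ((Λ-μ)/((κ:ℝ)+1)) ≤ (-μ)/2 * (2*(-μ)) :=
        mul_le_mul_of_nonneg_left hfr (by linarith)
      have h6 : (r:ℝ) * ((-μ)/2 * ((Λ-μ)/((κ:ℝ)+1))) ≤ (r:ℝ) * ((-μ)/2 * (2*(-μ))) :=
        mul_le_mul_of_nonneg_left h5 (by positivity)
      have h7 : (r:ℝ) * ((-μ)/2 * (2*(-μ))) = (r:ℝ) * μ^2 := by ring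
      rw [h3] at h2
      linarith [h2, h6]
    have hfinal : (r:ℝ) * μ^2 = (r:ℝ) * lamr^2 * lam1^2 := by rw [hμdef]; ring
    calc (∫ t in (0:ℝ)..T, deriv ℓ t * (if 0 ≤ deriv ℓ t then 1 else 0))
        ≤ ∫ t in (0:ℝ)..T, g' t := hmonoInt
      _ = g T - g 0 := hFTC
      _ ≤ (r:ℝ) * μ^2 := hbudget
      _ = r * lamr ^ 2 * lam1 ^ 2 := hfinal
end

section
/- Let ℓ : [0,∞) → ℝ be continuously differentiable, bounded below by 0, and suppose ∫₀ᵀ (dℓ/dt)𝟙[dℓ/dt ≥ 0] dt ≤ M for all T and some finite M. Suppose further that for every ε > 0 and every T ≥ 0 there exists t ≥ T with ℓ(t) ≤ ε. Then lim_{t→∞} ℓ(t) = 0. -/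
open MeasureTheory

/-- If `ℓ : ℝ → ℝ` is continuously differentiable, nonnegative,
its total increase `∫₀ᵀ (dℓ/dt)𝟙[dℓ/dt ≥ 0] dt` is bounded by a finite `M` for
all `T ≥ 0`, and for every `ε > 0` and `T ≥ 0` there is `t ≥ T` with
`ℓ(t) ≤ ε`, then `ℓ(t) → 0` as `t → ∞`. -/
theorem stmt16 (ℓ : ℝ → ℝ) (M : ℝ)
    (hC1 : ContDiff ℝ 1 ℓ)
    (hnn : ∀ t : ℝ, 0 ≤ ℓ t)
    (hM : ∀ T : ℝ, 0 ≤ T →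
      (∫ t in (0:ℝ)..T, deriv ℓ t * (if 0 ≤ deriv ℓ t then 1 else 0)) ≤ M)
    (hsmall : ∀ ε : ℝ, 0 < ε → ∀ T : ℝ, 0 ≤ T → ∃ t, T ≤ t ∧ ℓ t ≤ ε) :
    Filter.Tendsto ℓ Filter.atTop (nhds 0) := by
  set g : ℝ → ℝ := fun t => max (deriv ℓ t) 0 with hg
  have hc : Continuous (deriv ℓ) := hC1.continuous_deriv le_rfl
  have hgc : Continuous g := hc.max continuous_const
  have hgint : ∀ a b : ℝ, IntervalIntegrable g volume a b :=
    fun a b => hgc.intervalIntegrable a b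
  have hdint : ∀ a b : ℝ, IntervalIntegrable (deriv ℓ) volume a b :=
    fun a b => hc.intervalIntegrable a b
  have hgnn : ∀ x, 0 ≤ g x := fun x => le_max_right _ _
  have hkey : ∀ a b : ℝ,
      (∫ t in a..b, deriv ℓ t * (if 0 ≤ deriv ℓ t then 1 else 0)) = ∫ t in a..b, g t := by
    intro a b
    apply intervalIntegral.integral_congr
    intro x _
    by_cases h : 0 ≤ deriv ℓ x
    · simp [hg, h, max_eq_left h]
    · simp [hg, h, max_eq_right (le_of_not_ge h)]
  set F : ℝ → ℝ := fun T => ∫ t in (0:ℝ)..(max T 0), g t with hF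
  have hFsplit : ∀ a b : ℝ, a ≤ b →
      F b = F a + ∫ t in (max a 0)..(max b 0), g t := by
    intro a b hab
    have := intervalIntegral.integral_add_adjacent_intervals
      (hgint 0 (max a 0)) (hgint (max a 0) (max b 0))
    simp [hF, this]
  have hFmono : Monotone F := by
    intro a b hab
    rw [hFsplit a b hab]
    have : 0 ≤ ∫ t in (max a 0)..(max b 0), g t :=
      intervalIntegral.integral_nonneg (max_le_max hab le_rfl) (fun x _ => hgnn x)
    linarith
  have hFbdd : BddAbove (Set.range F) := by
    refine ⟨M, ?_⟩
    rintro _ ⟨T, rfl⟩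
    have := hM (max T 0) (le_max_right _ _)
    rw [hkey] at this
    exact this
  have hlim : Filter.Tendsto F Filter.atTop (nhds (⨆ T, F T)) :=
    tendsto_atTop_ciSup hFmono hFbdd
  set L := ⨆ T, F T
  rw [Metric.tendsto_atTop]
  intro ε hε
  obtain ⟨T₀, hT₀⟩ := Metric.tendsto_atTop.mp hlim (ε / 4) (by positivity)
  set T₁ := max T₀ 0 with hT₁
  obtain ⟨t, ht1, ht2⟩ := hsmall (ε / 2) (by positivity) T₁ (le_max_right _ _)
  have ht0 : (0:ℝ) ≤ t := le_trans (le_max_right _ _) ht1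
  refine ⟨t, fun s hs => ?_⟩
  have hs0 : (0:ℝ) ≤ s := le_trans ht0 hs
  -- F s - F t < ε/2
  have hFt : |F t - L| < ε / 4 := by
    have := hT₀ t (le_trans (le_max_left _ _) ht1)
    rwa [Real.dist_eq] at this
  have hFs : |F s - L| < ε / 4 := by
    have := hT₀ s (le_trans (le_trans (le_max_left _ _) ht1) hs)
    rwa [Real.dist_eq] at this
  have hFdiff : F s - F t < ε / 2 := by
    rw [abs_lt] at hFt hFs
    linarith [hFt.1, hFt.2, hFs.1, hFs.2]
  -- ℓ s = ℓ t + ∫ deriv ≤ ℓ t + (F s - F t)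
  have hftc : ℓ s - ℓ t = ∫ x in t..s, deriv ℓ x :=
    (intervalIntegral.integral_deriv_eq_sub
      (fun x _ => (hC1.differentiable one_ne_zero).differentiableAt) (hdint t s)).symm
  have hFts : F s = F t + ∫ x in t..s, g x := by
    have h := hFsplit t s hs
    rw [max_eq_left ht0, max_eq_left hs0] at h
    exact h
  have hmono : (∫ x in t..s, deriv ℓ x) ≤ ∫ x in t..s, g x :=
    intervalIntegral.integral_mono_on hs (hdint t s) (hgint t s)
      (fun x _ => le_max_left _ _)
  have hls : ℓ s < ε := by
    have : ℓ s ≤ ℓ t + (F s - F t) := by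
      rw [hFts]; linarith [hftc, hmono]
    linarith
  rw [Real.dist_eq, sub_zero, abs_of_nonneg (hnn s)]
  exact hls
end

section
/- In one dimension (m = 1): let y ∈ ℝⁿ, c ∈ ℝʳ, Z(t) ∈ ℝ^{n×r} of full column rank evolve by dZ/dt = (y − ŷ)cᵀ with w = (ZᵀZ)⁻¹Zᵀy and ŷ = Zw. Then d(cᵀw)/dt = cᵀ(ZᵀZ)⁻¹c · ‖y − ŷ‖² ≥ 0, so the alignment cᵀw is nondecreasing. -/
open Matrix

/-- (m = 1 case.) Let `Z(t)` evolve by `dZ/dt = (y − ŷ)cᵀ` with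
`w = (ZᵀZ)⁻¹Zᵀy`, `ŷ = Zw`, and `Z(t)` of full column rank. Then
`d(cᵀw)/dt = cᵀ(ZᵀZ)⁻¹c · ‖y − ŷ‖² ≥ 0`, so the alignment `cᵀw` is
nondecreasing. -/
theorem stmt17 (n r : ℕ)
    (y : Fin n → ℝ) (c : Fin r → ℝ)
    (Z : ℝ → Matrix (Fin n) (Fin r) ℝ)
    (hZ : ∀ t : ℝ, IsUnit ((Z t)ᵀ * Z t))
    (w : ℝ → (Fin r → ℝ))
    (hw : ∀ t, w t = ((Z t)ᵀ * Z t)⁻¹ *ᵥ ((Z t)ᵀ *ᵥ y))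
    (yhat : ℝ → (Fin n → ℝ)) (hyhat : ∀ t, yhat t = Z t *ᵥ w t)
    (hdyn : ∀ t : ℝ, ∀ i j, HasDerivAt (fun s => Z s i j)
      ((y - yhat t) i * c j) t) :
    (∀ t : ℝ,
      HasDerivAt (fun s => c ⬝ᵥ w s)
        ((c ⬝ᵥ (((Z t)ᵀ * Z t)⁻¹ *ᵥ c)) * ((y - yhat t) ⬝ᵥ (y - yhat t))) t ∧
      0 ≤ (c ⬝ᵥ (((Z t)ᵀ * Z t)⁻¹ *ᵥ c)) * ((y - yhat t) ⬝ᵥ (y - yhat t))) ∧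
    Monotone (fun t => c ⬝ᵥ w t) := by
  have hdet : ∀ s, IsUnit ((Z s)ᵀ * Z s).det :=
    fun s => (Matrix.isUnit_iff_isUnit_det _).mp (hZ s)
  -- residual orthogonality: Zᵀ(y - ŷ) = 0
  have hres : ∀ s, (Z s)ᵀ *ᵥ (y - yhat s) = 0 := by
    intro s
    have h1 : (Z s)ᵀ *ᵥ yhat s = (Z s)ᵀ *ᵥ y := by
      rw [hyhat, hw, Matrix.mulVec_mulVec, Matrix.mulVec_mulVec,
        Matrix.mul_nonsing_inv _ (hdet s), Matrix.one_mulVec]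
    rw [Matrix.mulVec_sub, h1, sub_self]
  have hres' : ∀ s k, ∑ i, Z s i k * (y - yhat s) i = 0 := by
    intro s k
    have := congrFun (hres s) k
    simpa [Matrix.mulVec, dotProduct, Matrix.transpose_apply] using this
  -- ZᵀZ is constant
  have hAconst : ∀ s t', (Z s)ᵀ * Z s = (Z t')ᵀ * Z t' := by
    intro s t'
    ext j k
    have hd : ∀ u, HasDerivAt (fun v => ((Z v)ᵀ * Z v) j k) 0 u := by
      intro u
      have h : HasDerivAt (fun v => ∑ i, Z v i j * Z v i k)
          (∑ i, ((y - yhat u) i * c j * Z u i k + Z u i j * ((y - yhat u) i * c k))) u :=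
        HasDerivAt.fun_sum fun i _ => (hdyn u i j).mul (hdyn u i k)
      have hz : (∑ i, ((y - yhat u) i * c j * Z u i k + Z u i j * ((y - yhat u) i * c k))) = 0 := by
        rw [Finset.sum_add_distrib]
        have h1 : ∑ i, (y - yhat u) i * c j * Z u i k
            = c j * ∑ i, Z u i k * (y - yhat u) i := by
          rw [Finset.mul_sum]; exact Finset.sum_congr rfl fun i _ => by ring
        have h2 : ∑ i, Z u i j * ((y - yhat u) i * c k)
            = c k * ∑ i, Z u i j * (y - yhat u) i := by
          rw [Finset.mul_sum]; exact Finset.sum_congr rfl fun i _ => by ring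
        rw [h1, h2, hres' u k, hres' u j]; ring
      rw [hz] at h
      simpa only [Matrix.mul_apply, Matrix.transpose_apply] using h
    exact is_const_of_deriv_eq_zero (fun u => (hd u).differentiableAt)
      (fun u => (hd u).deriv) s t'
  -- (y - ŷ) ⬝ y = (y - ŷ) ⬝ (y - ŷ)
  have hey : ∀ t, (y - yhat t) ⬝ᵥ y = (y - yhat t) ⬝ᵥ (y - yhat t) := by
    intro t
    have h0 : (y - yhat t) ⬝ᵥ yhat t = 0 := by
      nth_rewrite 2 [hyhat]
      rw [Matrix.dotProduct_mulVec, ← Matrix.mulVec_transpose, hres,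
        zero_dotProduct]
    have : (y - yhat t) ⬝ᵥ (y - (y - yhat t)) = 0 := by
      have : y - (y - yhat t) = yhat t := by abel
      rw [this, h0]
    rw [dotProduct_sub] at this
    linarith
  -- the derivative statement
  have hderiv : ∀ t, HasDerivAt (fun s => c ⬝ᵥ w s)
      ((c ⬝ᵥ (((Z t)ᵀ * Z t)⁻¹ *ᵥ c)) * ((y - yhat t) ⬝ᵥ (y - yhat t))) t := by
    intro t
    set B := ((Z t)ᵀ * Z t)⁻¹ with hB
    have hwB : ∀ s, c ⬝ᵥ w s = ∑ j, c j * ∑ k, B j k * ∑ i, Z s i k * y i := by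
      intro s
      rw [hw, hAconst s t]
      simp [dotProduct, Matrix.mulVec, Matrix.transpose_apply]
      rfl
    have hsum : HasDerivAt (fun s => ∑ j, c j * ∑ k, B j k * ∑ i, Z s i k * y i)
        (∑ j, c j * ∑ k, B j k * ∑ i, ((y - yhat t) i * c k) * y i) t := by
      refine HasDerivAt.fun_sum fun j _ => HasDerivAt.const_mul _ ?_
      refine HasDerivAt.fun_sum fun k _ => HasDerivAt.const_mul _ ?_
      exact HasDerivAt.fun_sum fun i _ => (hdyn t i k).mul_const (y i)
    have hinner : ∀ k, ∑ i, ((y - yhat t) i * c k) * y i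
        = c k * ((y - yhat t) ⬝ᵥ y) := by
      intro k
      rw [dotProduct, Finset.mul_sum]
      exact Finset.sum_congr rfl fun i _ => by ring
    have hval : (∑ j, c j * ∑ k, B j k * ∑ i, ((y - yhat t) i * c k) * y i)
        = (c ⬝ᵥ (B *ᵥ c)) * ((y - yhat t) ⬝ᵥ (y - yhat t)) := by
      rw [← hey t]
      set S := (y - yhat t) ⬝ᵥ y with hS
      simp only [hinner]
      simp only [dotProduct, Matrix.mulVec, Finset.sum_mul, Finset.mul_sum]
      refine Finset.sum_congr rfl fun j _ => Finset.sum_congr rfl fun k _ => by ring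
    rw [hval] at hsum
    have heq : (fun s => c ⬝ᵥ w s)
        = fun s => ∑ j, c j * ∑ k, B j k * ∑ i, Z s i k * y i := funext hwB
    rw [heq]
    exact hsum
  -- nonnegativity
  have hpos : ∀ t, 0 ≤ (c ⬝ᵥ (((Z t)ᵀ * Z t)⁻¹ *ᵥ c)) * ((y - yhat t) ⬝ᵥ (y - yhat t)) := by
    intro t
    have h1 : 0 ≤ c ⬝ᵥ (((Z t)ᵀ * Z t)⁻¹ *ᵥ c) := by
      set u := ((Z t)ᵀ * Z t)⁻¹ *ᵥ c with hu
      have hcu : ((Z t)ᵀ * Z t) *ᵥ u = c := by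
        rw [hu, Matrix.mulVec_mulVec, Matrix.mul_nonsing_inv _ (hdet t), Matrix.one_mulVec]
      have : c ⬝ᵥ u = (Z t *ᵥ u) ⬝ᵥ (Z t *ᵥ u) := by
        conv_lhs => rw [← hcu]
        rw [← Matrix.mulVec_mulVec, Matrix.mulVec_transpose, ← Matrix.dotProduct_mulVec]
      rw [this]
      exact Finset.sum_nonneg fun i _ => mul_self_nonneg _
    have h2 : 0 ≤ (y - yhat t) ⬝ᵥ (y - yhat t) :=
      Finset.sum_nonneg fun i _ => mul_self_nonneg _
    exact mul_nonneg h1 h2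
  refine ⟨fun t => ⟨hderiv t, hpos t⟩, ?_⟩
  exact monotone_of_deriv_nonneg (fun t => (hderiv t).differentiableAt)
    (fun t => by rw [(hderiv t).deriv]; exact hpos t)
end

section
/- In one dimension (m = 1) under FA* dynamics, the loss derivative satisfies d‖(y−ŷ)cᵀ‖_F²/dt = −2‖y − ŷ‖²‖c‖²(cᵀw). In particular, the loss is strictly decreasing whenever cᵀw > 0 and y ≠ ŷ. -/
open Matrix

theorem aux_det (r : ℕ) (M : ℝ → Matrix (Fin r) (Fin r) ℝ) (t : ℝ)
    (h : ∀ i j, DifferentiableAt ℝ (fun s => M s i j) t) :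
    DifferentiableAt ℝ (fun s => (M s).det) t := by
  simp only [Matrix.det_apply, Units.smul_def, zsmul_eq_mul]
  apply DifferentiableAt.fun_sum
  intro σ _
  apply DifferentiableAt.const_mul
  apply DifferentiableAt.fun_finsetProd
  intro i _
  exact h _ _

theorem aux_inv (r : ℕ) (M : ℝ → Matrix (Fin r) (Fin r) ℝ) (t : ℝ)
    (h : ∀ i j, DifferentiableAt ℝ (fun s => M s i j) t)
    (hu : IsUnit (M t)) (j k : Fin r) :
    DifferentiableAt ℝ (fun s => (M s)⁻¹ j k) t := by
  have hdet : ∀ s, (M s)⁻¹ j k = ((M s).det)⁻¹ * (M s).adjugate j k := by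
    intro s
    rw [Matrix.inv_def]
    simp [Ring.inverse_eq_inv]
  simp only [hdet]
  apply DifferentiableAt.mul
  · apply DifferentiableAt.inv
    · exact aux_det r M t h
    · exact ((Matrix.isUnit_iff_isUnit_det _).mp hu).ne_zero
  · simp only [Matrix.adjugate_apply]
    apply aux_det
    intro a b
    by_cases hb : a = k
    · subst hb; simp [Matrix.updateRow_apply]
    · simp only [Matrix.updateRow_apply, if_neg hb]
      exact h _ _

/-- (m = 1 case.) Under FA* dynamics `dZ/dt = (y−ŷ)cᵀ` with
`w = (ZᵀZ)⁻¹Zᵀy`, `ŷ = Zw`, the loss `ℓ = ‖(y−ŷ)cᵀ‖_F² = ‖y−ŷ‖²‖c‖²` satisfies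
`dℓ/dt = −2‖y − ŷ‖²‖c‖²(cᵀw)`; in particular the loss derivative is strictly
negative whenever `cᵀw > 0` and `y ≠ ŷ`. -/
theorem stmt18 (n r : ℕ)
    (y : Fin n → ℝ) (c : Fin r → ℝ)
    (Z : ℝ → Matrix (Fin n) (Fin r) ℝ)
    (hZ : ∀ t : ℝ, IsUnit ((Z t)ᵀ * Z t))
    (w : ℝ → (Fin r → ℝ))
    (hw : ∀ t, w t = ((Z t)ᵀ * Z t)⁻¹ *ᵥ ((Z t)ᵀ *ᵥ y))
    (yhat : ℝ → (Fin n → ℝ)) (hyhat : ∀ t, yhat t = Z t *ᵥ w t)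
    (hdyn : ∀ t : ℝ, ∀ i j, HasDerivAt (fun s => Z s i j)
      ((y - yhat t) i * c j) t)
    (ℓ : ℝ → ℝ)
    (hℓ : ∀ t, ℓ t = ((y - yhat t) ⬝ᵥ (y - yhat t)) * (c ⬝ᵥ c)) :
    (∀ t : ℝ, HasDerivAt ℓ
      (-2 * ((y - yhat t) ⬝ᵥ (y - yhat t)) * (c ⬝ᵥ c) * (c ⬝ᵥ w t)) t) ∧
    (∀ t : ℝ, 0 < c ⬝ᵥ w t → y ≠ yhat t → deriv ℓ t < 0) := by
  -- orthogonality of residual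
  have horth : ∀ t j, (∑ i, Z t i j * (y i - yhat t i)) = 0 := by
    intro t j
    have h1 : (Z t)ᵀ *ᵥ (y - yhat t) = 0 := by
      have hinv : (Z t)ᵀ * Z t * ((Z t)ᵀ * Z t)⁻¹ = 1 :=
        Matrix.mul_nonsing_inv _ ((Matrix.isUnit_iff_isUnit_det _).mp (hZ t))
      rw [Matrix.mulVec_sub, hyhat t, Matrix.mulVec_mulVec, hw t,
        Matrix.mulVec_mulVec, hinv, Matrix.one_mulVec, sub_self]
    have := congrFun h1 j
    simpa [Matrix.mulVec, dotProduct, Matrix.transpose_apply] using this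
  have main : ∀ t : ℝ, HasDerivAt ℓ
      (-2 * ((y - yhat t) ⬝ᵥ (y - yhat t)) * (c ⬝ᵥ c) * (c ⬝ᵥ w t)) t := by
    intro t₀
    -- differentiability of entries of (ZᵀZ)
    have hAentry : ∀ j k, DifferentiableAt ℝ (fun s => ((Z s)ᵀ * Z s) j k) t₀ := by
      intro j k
      simp only [Matrix.mul_apply, Matrix.transpose_apply]
      exact DifferentiableAt.fun_sum fun i _ =>
        ((hdyn t₀ i j).differentiableAt.mul (hdyn t₀ i k).differentiableAt)
    have hinv : ∀ j k, DifferentiableAt ℝ (fun s => ((Z s)ᵀ * Z s)⁻¹ j k) t₀ :=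
      aux_inv r _ t₀ hAentry (hZ t₀)
    have hwdiff : ∀ j, DifferentiableAt ℝ (fun s => w s j) t₀ := by
      intro j
      have : (fun s => w s j)
          = fun s => ∑ k, ((Z s)ᵀ * Z s)⁻¹ j k * (∑ i, Z s i k * y i) := by
        funext s
        simp [hw s, Matrix.mulVec, dotProduct, Matrix.transpose_apply]
      rw [this]
      exact DifferentiableAt.fun_sum fun k _ =>
        (hinv j k).mul (DifferentiableAt.fun_sum fun i _ =>
          (hdyn t₀ i k).differentiableAt.mul_const _)
    set w' : Fin r → ℝ := fun j => deriv (fun s => w s j) t₀ with hw'def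
    have hw' : ∀ j, HasDerivAt (fun s => w s j) (w' j) t₀ := fun j =>
      (hwdiff j).hasDerivAt
    -- derivative of yhat
    have hyd : ∀ i, HasDerivAt (fun s => yhat s i)
        (∑ j, ((y - yhat t₀) i * c j * w t₀ j + Z t₀ i j * w' j)) t₀ := by
      intro i
      have : (fun s => yhat s i) = fun s => ∑ j, Z s i j * w s j := by
        funext s
        simp [hyhat s, Matrix.mulVec, dotProduct]
      rw [this]
      exact HasDerivAt.fun_sum fun j _ => (hdyn t₀ i j).mul (hw' j)
    set D : Fin n → ℝ :=
      fun i => ∑ j, ((y - yhat t₀) i * c j * w t₀ j + Z t₀ i j * w' j) with hD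
    -- derivative of ℓ
    have hl : HasDerivAt ℓ
        ((∑ i, (-D i * (y i - yhat t₀ i) + (y i - yhat t₀ i) * -D i)) * (c ⬝ᵥ c)) t₀ := by
      have : ℓ = fun s => (∑ i, (y i - yhat s i) * (y i - yhat s i)) * (c ⬝ᵥ c) := by
        funext s
        simp [hℓ s, dotProduct]
      rw [this]
      apply HasDerivAt.mul_const
      exact HasDerivAt.fun_sum fun i _ =>
        ((hyd i).const_sub (y i)).mul ((hyd i).const_sub (y i))
    -- key identity
    have key : ∑ i, (y i - yhat t₀ i) * D i
        = ((y - yhat t₀) ⬝ᵥ (y - yhat t₀)) * (c ⬝ᵥ w t₀) := by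
      have expand : ∑ i, (y i - yhat t₀ i) * D i
          = ∑ j, ((∑ i, (y i - yhat t₀ i) * (y i - yhat t₀ i)) * (c j * w t₀ j)
            + w' j * (∑ i, Z t₀ i j * (y i - yhat t₀ i))) := by
        simp only [hD, Finset.mul_sum, Pi.sub_apply]
        rw [Finset.sum_comm]
        apply Finset.sum_congr rfl
        intro j _
        rw [Finset.sum_mul, ← Finset.sum_add_distrib]
        apply Finset.sum_congr rfl
        intro i _
        ring
      rw [expand]
      simp only [horth t₀, mul_zero, add_zero]
      rw [← Finset.mul_sum]
      simp [dotProduct, Pi.sub_apply]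
    convert hl using 1
    have h2 : (∑ i, (-D i * (y i - yhat t₀ i) + (y i - yhat t₀ i) * -D i))
        = -2 * ∑ i, (y i - yhat t₀ i) * D i := by
      rw [Finset.mul_sum]
      apply Finset.sum_congr rfl
      intro i _
      ring
    rw [h2, key]
    simp only [dotProduct, Pi.sub_apply]
    ring
  refine ⟨main, ?_⟩
  intro t hcw hne
  rw [(main t).deriv]
  have he : 0 < (y - yhat t) ⬝ᵥ (y - yhat t) := by
    have hnn : 0 ≤ (y - yhat t) ⬝ᵥ (y - yhat t) :=
      Finset.sum_nonneg fun i _ => mul_self_nonneg _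
    rcases lt_or_eq_of_le hnn with h | h
    · exact h
    · exfalso
      apply hne
      have := (dotProduct_self_eq_zero (v := y - yhat t)).mp h.symm
      ext i
      have := congrFun this i
      simpa [sub_eq_zero] using this
  have hc : 0 < c ⬝ᵥ c := by
    have hnn : 0 ≤ c ⬝ᵥ c := Finset.sum_nonneg fun i _ => mul_self_nonneg _
    rcases lt_or_eq_of_le hnn with h | h
    · exact h
    · exfalso
      have hc0 : c = 0 := (dotProduct_self_eq_zero).mp h.symm
      rw [hc0] at hcw
      simp [dotProduct] at hcw
  have : -2 * ((y - yhat t) ⬝ᵥ (y - yhat t)) * (c ⬝ᵥ c) * (c ⬝ᵥ w t) < 0 := by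
    have := mul_pos (mul_pos he hc) hcw
    nlinarith
  exact this
end
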